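/- arXiv:1402.1881 — 8 statements merged into one kernel-verified Lean document; each statement's English description precedes it below -/
import Mathlib

section
/- Let x be an optimal feasible solution satisfying condition (⋆). Suppose that every job j ∈ 𝒥_f(x) has the same immediate successor (possibly the dummy successor) in every fractional schedule of x containing j. Then there exists an optimal feasible solution x* satisfying condition (⋆) such that every job j ∈ 𝒥_f(x*) has both the same immediate predecessor and the same immediate successor in every fractional schedule of x* containing j. -/
open scoped Classical BigOperators

/-- A finset of jobs is pairwise compatible. -/
def Compatible {n : ℕ} (r d : Fin n → ℝ) (L : ℝ) (s : Finset (Fin n)) : Prop :=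
  ∀ j ∈ s, ∀ k ∈ s, j < k → d j ≤ r k ∧ d k - r j ≤ L

/-- A schedule for machine class `i`. -/
def IsSchedule {n c : ℕ} (r d : Fin n → ℝ) (L : ℝ) (𝒥 : Fin c → Set (Fin n))
    (i : Fin c) (s : Finset (Fin n)) : Prop :=
  s.Nonempty ∧ Compatible r d L s ∧ ∀ j ∈ s, j ∈ 𝒥 i

/-- A feasible (fractional covering) solution. -/
def Feasible {n c : ℕ} (r d : Fin n → ℝ) (L : ℝ) (𝒥 : Fin c → Set (Fin n))
    (x : Fin c × Finset (Fin n) → ℝ) : Prop :=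
  (∀ p, 0 ≤ x p) ∧
  (∀ p, 0 < x p → IsSchedule r d L 𝒥 p.1 p.2) ∧
  (∀ j : Fin n, 1 ≤ ∑ p : Fin c × Finset (Fin n), if j ∈ p.2 then x p else 0)

/-- The cost of a solution. -/
def cost {n c : ℕ} (w : Fin c → ℝ) (x : Fin c × Finset (Fin n) → ℝ) : ℝ :=
  ∑ p : Fin c × Finset (Fin n), w p.1 * x p

/-- Optimality. -/
def Optimal {n c : ℕ} (r d : Fin n → ℝ) (L : ℝ) (𝒥 : Fin c → Set (Fin n)) (w : Fin c → ℝ)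
    (x : Fin c × Finset (Fin n) → ℝ) : Prop :=
  Feasible r d L 𝒥 x ∧ ∀ y, Feasible r d L 𝒥 y → cost w x ≤ cost w y

/-- A column is fractional. -/
def FracCol {n c : ℕ} (x : Fin c × Finset (Fin n) → ℝ) (p : Fin c × Finset (Fin n)) : Prop :=
  0 < x p ∧ x p < 1

/-- A fractional schedule of `x`. -/
def FracSched {n c : ℕ} (x : Fin c × Finset (Fin n) → ℝ) (s : Finset (Fin n)) : Prop :=
  ∃ i, FracCol x (i, s)

/-- The set of jobs belonging to some fractional schedule. -/
def Jf {n c : ℕ} (x : Fin c × Finset (Fin n) → ℝ) : Set (Fin n) :=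
  {j | ∃ s, FracSched x s ∧ j ∈ s}

/-- Immediate successor of `j` in `s` (`⊤` = dummy successor). -/
def succIn {n : ℕ} (s : Finset (Fin n)) (j : Fin n) : WithTop (Fin n) :=
  (s.filter (fun k => j < k)).min

/-- Immediate predecessor of `j` in `s` (`⊥` = dummy predecessor). -/
def predIn {n : ℕ} (s : Finset (Fin n)) (j : Fin n) : WithBot (Fin n) :=
  (s.filter (fun k => k < j)).max

/-- Condition (⋆). -/
def StarCond {n c : ℕ} (x : Fin c × Finset (Fin n) → ℝ) : Prop :=
  ∀ j ∈ Jf x, 1 ≤ ∑ p : Fin c × Finset (Fin n),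
    if FracCol x p ∧ j ∈ p.2 then x p else 0

/-- Integral solution. -/
def Integral {n c : ℕ} (x : Fin c × Finset (Fin n) → ℝ) : Prop :=
  ∀ p, x p = 0 ∨ x p = 1


namespace SameSuccAux

variable {n c : ℕ}

lemma predIn_eq_bot_iff {s : Finset (Fin n)} {j : Fin n} :
    predIn s j = ⊥ ↔ ∀ t ∈ s, ¬ t < j := by
  unfold predIn
  rw [Finset.max_eq_bot, Finset.filter_eq_empty_iff]

lemma predIn_mem {s : Finset (Fin n)} {j k : Fin n}
    (h : predIn s j = (k : WithBot (Fin n))) : k ∈ s ∧ k < j := by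
  unfold predIn at h
  have hk := Finset.mem_of_max h
  simpa using hk

lemma predIn_le {s : Finset (Fin n)} {j k t : Fin n} (h : predIn s j = (k : WithBot (Fin n)))
    (ht : t ∈ s) (htj : t < j) : t ≤ k := by
  unfold predIn at h
  have hmem : t ∈ s.filter (fun a => a < j) := Finset.mem_filter.2 ⟨ht, htj⟩
  have h2 := Finset.le_max hmem
  rw [h] at h2
  exact_mod_cast h2

lemma succIn_eq_top_iff {s : Finset (Fin n)} {j : Fin n} :
    succIn s j = ⊤ ↔ ∀ t ∈ s, ¬ j < t := by
  unfold succIn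
  rw [Finset.min_eq_top, Finset.filter_eq_empty_iff]

lemma succIn_mem {s : Finset (Fin n)} {j k : Fin n}
    (h : succIn s j = (k : WithTop (Fin n))) : k ∈ s ∧ j < k := by
  unfold succIn at h
  have hk := Finset.mem_of_min h
  simpa using hk

lemma succIn_le {s : Finset (Fin n)} {j k t : Fin n} (h : succIn s j = (k : WithTop (Fin n)))
    (ht : t ∈ s) (hjt : j < t) : k ≤ t := by
  unfold succIn at h
  have hmem : t ∈ s.filter (fun a => j < a) := Finset.mem_filter.2 ⟨ht, hjt⟩
  have h2 := Finset.min_le hmem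
  rw [h] at h2
  exact_mod_cast h2

lemma succIn_of_predIn {s : Finset (Fin n)} {j k : Fin n} (hj : j ∈ s)
    (h : predIn s j = (k : WithBot (Fin n))) : succIn s k = (j : WithTop (Fin n)) := by
  obtain ⟨hks, hkj⟩ := predIn_mem h
  unfold succIn
  apply le_antisymm
  · exact Finset.min_le (Finset.mem_filter.2 ⟨hj, hkj⟩)
  · apply Finset.le_min
    intro t ht
    rw [Finset.mem_filter] at ht
    rcases lt_or_ge t j with hlt | hle
    · exact absurd (predIn_le h ht.1 hlt) (not_le.2 ht.2)
    · exact_mod_cast hle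

lemma predIn_of_succIn {s : Finset (Fin n)} {j k : Fin n} (hk : k ∈ s)
    (h : succIn s k = (j : WithTop (Fin n))) : predIn s j = (k : WithBot (Fin n)) := by
  obtain ⟨hjs, hkj⟩ := succIn_mem h
  unfold predIn
  apply le_antisymm
  · apply Finset.max_le
    intro t ht
    rw [Finset.mem_filter] at ht
    rcases lt_or_ge k t with hlt | hle
    · exact absurd (succIn_le h ht.1 hlt) (not_le.2 ht.2)
    · exact_mod_cast hle
  · exact Finset.le_max (Finset.mem_filter.2 ⟨hk, hkj⟩)

lemma tails_eq (x : Fin c × Finset (Fin n) → ℝ)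
    (hsucc : ∀ j ∈ Jf x, ∀ s s' : Finset (Fin n),
      FracSched x s → FracSched x s' → j ∈ s → j ∈ s' → succIn s j = succIn s' j) :
    ∀ (j : Fin n) (s s' : Finset (Fin n)), FracSched x s → FracSched x s' → j ∈ s → j ∈ s' →
      s.filter (fun t => j ≤ t) = s'.filter (fun t => j ≤ t) := by
  suffices H : ∀ (m : ℕ) (j : Fin n), n - j.val ≤ m →
      ∀ (s s' : Finset (Fin n)), FracSched x s → FracSched x s' → j ∈ s → j ∈ s' →
        s.filter (fun t => j ≤ t) = s'.filter (fun t => j ≤ t) by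
    intro j; exact H (n - j.val) j le_rfl
  intro m
  induction m with
  | zero =>
    intro j hm
    have := j.isLt; omega
  | succ m ih =>
    intro j hm s s' hs hs' hjs hjs'
    have hjf : j ∈ Jf x := ⟨s, hs, hjs⟩
    have he := hsucc j hjf s s' hs hs' hjs hjs'
    cases hsj : succIn s j with
    | top =>
      have hsj' : succIn s' j = ⊤ := by rw [← he, hsj]
      have key : ∀ (u : Finset (Fin n)), j ∈ u → succIn u j = ⊤ →
          u.filter (fun t => j ≤ t) = {j} := by
        intro u hju hu
        rw [succIn_eq_top_iff] at hu
        ext t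
        simp only [Finset.mem_filter, Finset.mem_singleton]
        constructor
        · rintro ⟨htu, hjt⟩
          rcases eq_or_lt_of_le hjt with h | h
          · exact h.symm
          · exact absurd h (hu t htu)
        · rintro rfl; exact ⟨hju, le_rfl⟩
      rw [key s hjs hsj, key s' hjs' hsj']
    | coe j2 =>
      have hsj2 : succIn s j = (j2 : WithTop (Fin n)) := hsj
      have hsj2' : succIn s' j = (j2 : WithTop (Fin n)) := by rw [← he, hsj2]
      obtain ⟨hj2s, hjj2⟩ := succIn_mem hsj2
      obtain ⟨hj2s', _⟩ := succIn_mem hsj2'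
      have key : ∀ (u : Finset (Fin n)), j ∈ u → succIn u j = (j2 : WithTop (Fin n)) →
          u.filter (fun t => j ≤ t) = insert j (u.filter (fun t => j2 ≤ t)) := by
        intro u hju hu
        ext t
        simp only [Finset.mem_filter, Finset.mem_insert]
        constructor
        · rintro ⟨htu, hjt⟩
          rcases eq_or_lt_of_le hjt with h | h
          · exact Or.inl h.symm
          · exact Or.inr ⟨htu, succIn_le hu htu h⟩
        · rintro (rfl | ⟨htu, h2t⟩)
          · exact ⟨hju, le_rfl⟩
          · exact ⟨htu, le_trans (le_of_lt hjj2) h2t⟩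
      rw [key s hjs hsj2, key s' hjs' hsj2']
      have hm2 : n - j2.val ≤ m := by
        have := j2.isLt
        have : j.val < j2.val := hjj2
        omega
      rw [ih j2 hm2 s s' hs hs' hj2s hj2s']

/-- The canonical predecessor of a job. -/
noncomputable def piX (x : Fin c × Finset (Fin n) → ℝ) (j : Fin n) : WithBot (Fin n) :=
  if h : ∃ s, FracSched x s ∧ j ∈ s ∧ predIn s j ≠ ⊥ then predIn h.choose j else ⊥

/-- The schedule `s` is canonical up to `t`. -/
def CanonX (x : Fin c × Finset (Fin n) → ℝ) (s : Finset (Fin n)) (t : Fin n) : Prop :=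
  ∀ u ∈ s, u ≤ t → predIn s u = piX x u

/-- Truncation of a schedule at the first non-canonical entry. -/
noncomputable def truncX (x : Fin c × Finset (Fin n) → ℝ) (s : Finset (Fin n)) :
    Finset (Fin n) :=
  s.filter (fun t => CanonX x s t)

lemma piX_bot {x : Fin c × Finset (Fin n) → ℝ} {j : Fin n} (h : piX x j = ⊥) :
    ∀ s, FracSched x s → j ∈ s → predIn s j = ⊥ := by
  intro s hs hjs
  by_contra hne
  have hex : ∃ s, FracSched x s ∧ j ∈ s ∧ predIn s j ≠ ⊥ := ⟨s, hs, hjs, hne⟩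
  rw [piX, dif_pos hex] at h
  exact hex.choose_spec.2.2 h

lemma piX_coe {x : Fin c × Finset (Fin n) → ℝ} {j k : Fin n}
    (h : piX x j = (k : WithBot (Fin n))) :
    ∃ s, FracSched x s ∧ j ∈ s ∧ predIn s j = (k : WithBot (Fin n)) := by
  by_cases hex : ∃ s, FracSched x s ∧ j ∈ s ∧ predIn s j ≠ ⊥
  · refine ⟨hex.choose, hex.choose_spec.1, hex.choose_spec.2.1, ?_⟩
    rw [piX, dif_pos hex] at h; exact h
  · rw [piX, dif_neg hex] at h
    exact absurd h.symm (by simp)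

lemma canon_mono {x : Fin c × Finset (Fin n) → ℝ} {s : Finset (Fin n)} {t t' : Fin n}
    (h : CanonX x s t) (hle : t' ≤ t) : CanonX x s t' :=
  fun u hu hut => h u hu (hut.trans hle)

lemma prefix_eq (x : Fin c × Finset (Fin n) → ℝ) :
    ∀ (j : Fin n) (s s' : Finset (Fin n)), j ∈ s → j ∈ s' → CanonX x s j → CanonX x s' j →
      s.filter (fun t => t < j) = s'.filter (fun t => t < j) := by
  suffices H : ∀ (m : ℕ) (j : Fin n), j.val < m →
      ∀ (s s' : Finset (Fin n)), j ∈ s → j ∈ s' → CanonX x s j → CanonX x s' j →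
        s.filter (fun t => t < j) = s'.filter (fun t => t < j) by
    intro j; exact H (j.val + 1) j (Nat.lt_succ_self _)
  intro m
  induction m with
  | zero => intro j hm; omega
  | succ m ih =>
    intro j hm s s' hjs hjs' hc hc'
    have hpj : predIn s j = piX x j := hc j hjs le_rfl
    have hpj' : predIn s' j = piX x j := hc' j hjs' le_rfl
    cases hp : piX x j with
    | bot =>
      have h1 : s.filter (fun t => t < j) = ∅ := by
        apply Finset.max_eq_bot.1
        rw [← predIn] at *
        rw [hpj, hp]
      have h2 : s'.filter (fun t => t < j) = ∅ := by
        apply Finset.max_eq_bot.1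
        rw [← predIn] at *
        rw [hpj', hp]
      rw [h1, h2]
    | coe k =>
      have hpk : predIn s j = (k : WithBot (Fin n)) := by rw [hpj, hp]
      have hpk' : predIn s' j = (k : WithBot (Fin n)) := by rw [hpj', hp]
      have key : ∀ (u : Finset (Fin n)), predIn u j = (k : WithBot (Fin n)) →
          u.filter (fun t => t < j) = insert k (u.filter (fun t => t < k)) := by
        intro u hu
        obtain ⟨hku, hkj⟩ := predIn_mem hu
        ext t
        simp only [Finset.mem_filter, Finset.mem_insert]
        constructor
        · rintro ⟨htu, htj⟩
          rcases eq_or_lt_of_le (predIn_le hu htu htj) with h | h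
          · exact Or.inl h
          · exact Or.inr ⟨htu, h⟩
        · rintro (rfl | ⟨htu, htk⟩)
          · exact ⟨hku, hkj⟩
          · exact ⟨htu, htk.trans hkj⟩
      rw [key s hpk, key s' hpk']
      have hkj : k < j := (predIn_mem hpk).2
      have hm2 : k.val < m := by
        have : k.val < j.val := hkj
        omega
      rw [ih k hm2 s s' (predIn_mem hpk).1 (predIn_mem hpk').1
        (canon_mono hc (le_of_lt hkj)) (canon_mono hc' (le_of_lt hkj))]
lemma canon_sched_unique (x : Fin c × Finset (Fin n) → ℝ)
    (hsucc : ∀ j ∈ Jf x, ∀ s s' : Finset (Fin n),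
      FracSched x s → FracSched x s' → j ∈ s → j ∈ s' → succIn s j = succIn s' j)
    {j : Fin n} {s s' : Finset (Fin n)} (hs : FracSched x s) (hs' : FracSched x s')
    (hjs : j ∈ s) (hjs' : j ∈ s') (hc : CanonX x s j) (hc' : CanonX x s' j) : s = s' := by
  have h1 := prefix_eq x j s s' hjs hjs' hc hc'
  have h2 := tails_eq x hsucc j s s' hs hs' hjs hjs'
  ext t
  rcases lt_or_ge t j with h | h
  · constructor <;> intro ht
    · have : t ∈ s'.filter (fun t => t < j) := h1 ▸ Finset.mem_filter.2 ⟨ht, h⟩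
      exact (Finset.mem_filter.1 this).1
    · have : t ∈ s.filter (fun t => t < j) := h1.symm ▸ Finset.mem_filter.2 ⟨ht, h⟩
      exact (Finset.mem_filter.1 this).1
  · constructor <;> intro ht
    · have : t ∈ s'.filter (fun t => j ≤ t) := h2 ▸ Finset.mem_filter.2 ⟨ht, h⟩
      exact (Finset.mem_filter.1 this).1
    · have : t ∈ s.filter (fun t => j ≤ t) := h2.symm ▸ Finset.mem_filter.2 ⟨ht, h⟩
      exact (Finset.mem_filter.1 this).1

lemma canon_weight (x : Fin c × Finset (Fin n) → ℝ)
    (hsucc : ∀ j ∈ Jf x, ∀ s s' : Finset (Fin n),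
      FracSched x s → FracSched x s' → j ∈ s → j ∈ s' → succIn s j = succIn s' j)
    (hstar : StarCond x) :
    ∀ j ∈ Jf x, (1:ℝ) ≤ ∑ p : Fin c × Finset (Fin n),
      if FracCol x p ∧ j ∈ p.2 ∧ CanonX x p.2 j then x p else 0 := by
  suffices H : ∀ (m : ℕ) (j : Fin n), j.val < m → j ∈ Jf x →
      (1:ℝ) ≤ ∑ p : Fin c × Finset (Fin n),
        if FracCol x p ∧ j ∈ p.2 ∧ CanonX x p.2 j then x p else 0 by
    intro j hj; exact H (j.val + 1) j (Nat.lt_succ_self _) hj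
  intro m
  induction m with
  | zero => intro j hm; omega
  | succ m ih =>
    intro j hm hjf
    by_cases hex : ∃ s, FracSched x s ∧ j ∈ s ∧ predIn s j ≠ ⊥
    · -- canonical predecessor exists
      have hpi : piX x j = predIn hex.choose j := by rw [piX, dif_pos hex]
      obtain ⟨hs₀, hjs₀, hne₀⟩ := hex.choose_spec
      set s₀ := hex.choose with hs₀def
      cases hpk : predIn s₀ j with
      | bot => exact absurd hpk hne₀
      | coe k =>
        have hpik : piX x j = (k : WithBot (Fin n)) := by rw [hpi, hpk]
        obtain ⟨hks₀, hkj⟩ := predIn_mem hpk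
        have hkJf : k ∈ Jf x := ⟨s₀, hs₀, hks₀⟩
        have hsucck : succIn s₀ k = (j : WithTop (Fin n)) := succIn_of_predIn hjs₀ hpk
        have hcond : ∀ p : Fin c × Finset (Fin n),
            (FracCol x p ∧ k ∈ p.2 ∧ CanonX x p.2 k) ↔
            (FracCol x p ∧ j ∈ p.2 ∧ CanonX x p.2 j) := by
          intro p
          constructor
          · rintro ⟨hf, hkm, hck⟩
            have hsched : FracSched x p.2 := ⟨p.1, hf⟩
            have hsj : succIn p.2 k = (j : WithTop (Fin n)) := by
              rw [hsucc k hkJf p.2 s₀ hsched hs₀ hkm hks₀]; exact hsucck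
            have hjm : j ∈ p.2 := (succIn_mem hsj).1
            have hpkj : predIn p.2 j = (k : WithBot (Fin n)) := predIn_of_succIn hkm hsj
            refine ⟨hf, hjm, ?_⟩
            intro u hu huj
            rcases eq_or_lt_of_le huj with rfl | hult
            · rw [hpkj, hpik]
            · exact hck u hu (predIn_le hpkj hu hult)
          · rintro ⟨hf, hjm, hcj⟩
            have hpkj : predIn p.2 j = (k : WithBot (Fin n)) := by
              rw [hcj j hjm le_rfl, hpik]
            have hkm : k ∈ p.2 := (predIn_mem hpkj).1
            exact ⟨hf, hkm, canon_mono hcj (le_of_lt (predIn_mem hpkj).2)⟩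
        have hsum : (∑ p : Fin c × Finset (Fin n),
            if FracCol x p ∧ j ∈ p.2 ∧ CanonX x p.2 j then x p else 0) =
            ∑ p : Fin c × Finset (Fin n),
            if FracCol x p ∧ k ∈ p.2 ∧ CanonX x p.2 k then x p else 0 :=
          Finset.sum_congr rfl fun p _ => if_congr (hcond p).symm rfl rfl
        rw [hsum]
        have hkm2 : k.val < m := by
          have h1 : k.val < j.val := hkj
          omega
        exact ih k hkm2 hkJf
    · -- no fractional schedule has a predecessor for j
      have hbot : piX x j = ⊥ := by rw [piX, dif_neg hex]
      have hcond : ∀ p : Fin c × Finset (Fin n),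
          (FracCol x p ∧ j ∈ p.2) ↔ (FracCol x p ∧ j ∈ p.2 ∧ CanonX x p.2 j) := by
        intro p
        constructor
        · rintro ⟨hf, hmj⟩
          refine ⟨hf, hmj, ?_⟩
          have hsched : FracSched x p.2 := ⟨p.1, hf⟩
          have hpbot : predIn p.2 j = ⊥ := piX_bot hbot p.2 hsched hmj
          intro u hu hut
          rcases eq_or_lt_of_le hut with rfl | hlt
          · rw [hpbot, hbot]
          · exact absurd hlt (predIn_eq_bot_iff.1 hpbot u hu)
        · rintro ⟨hf, hmj, _⟩; exact ⟨hf, hmj⟩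
      calc (1:ℝ) ≤ ∑ p : Fin c × Finset (Fin n), if FracCol x p ∧ j ∈ p.2 then x p else 0 :=
            hstar j hjf
        _ = _ := Finset.sum_congr rfl fun p _ => if_congr (hcond p) rfl rfl

lemma mem_trunc {x : Fin c × Finset (Fin n) → ℝ} {s : Finset (Fin n)} {j : Fin n} :
    j ∈ truncX x s ↔ j ∈ s ∧ CanonX x s j := Finset.mem_filter

lemma trunc_inj (x : Fin c × Finset (Fin n) → ℝ)
    (hsucc : ∀ j ∈ Jf x, ∀ s s' : Finset (Fin n),
      FracSched x s → FracSched x s' → j ∈ s → j ∈ s' → succIn s j = succIn s' j)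
    {s s' : Finset (Fin n)} (hs : FracSched x s) (hs' : FracSched x s')
    {j : Fin n} (hj : j ∈ truncX x s) (hj' : j ∈ truncX x s') : s = s' := by
  rw [mem_trunc] at hj hj'
  exact canon_sched_unique x hsucc hs hs' hj.1 hj'.1 hj.2 hj'.2

lemma exists_canon (x : Fin c × Finset (Fin n) → ℝ)
    (hsucc : ∀ j ∈ Jf x, ∀ s s' : Finset (Fin n),
      FracSched x s → FracSched x s' → j ∈ s → j ∈ s' → succIn s j = succIn s' j)
    (hstar : StarCond x) {j : Fin n} (hj : j ∈ Jf x) :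
    ∃ S, FracSched x S ∧ j ∈ truncX x S := by
  have h := canon_weight x hsucc hstar j hj
  have hne : (∑ p : Fin c × Finset (Fin n),
      if FracCol x p ∧ j ∈ p.2 ∧ CanonX x p.2 j then x p else 0) ≠ 0 := by
    intro h0; rw [h0] at h; linarith
  obtain ⟨p, -, hp⟩ := Finset.exists_ne_zero_of_sum_ne_zero hne
  by_cases hc : FracCol x p ∧ j ∈ p.2 ∧ CanonX x p.2 j
  · exact ⟨p.2, ⟨p.1, hc.1⟩, mem_trunc.2 ⟨hc.2.1, hc.2.2⟩⟩
  · rw [if_neg hc] at hp; exact absurd rfl hp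

/-- The modified solution. -/
noncomputable def newSol (x : Fin c × Finset (Fin n) → ℝ) :
    Fin c × Finset (Fin n) → ℝ := fun p =>
  if 1 ≤ x p then x p
  else if h : ∃ s, FracCol x (p.1, s) ∧ truncX x s = p.2 ∧ p.2.Nonempty ∧
      ¬ ∃ i, 1 ≤ x (i, p.2) then x (p.1, h.choose) else 0

lemma sum_snd_eq (t : Finset (Fin n)) (f : Fin c × Finset (Fin n) → ℝ) :
    (∑ p : Fin c × Finset (Fin n), if p.2 = t then f p else 0) = ∑ i : Fin c, f (i, t) := by
  rw [Fintype.sum_prod_type]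
  simp
lemma newSol_nonneg {x : Fin c × Finset (Fin n) → ℝ} (h0 : ∀ p, 0 ≤ x p) (p) :
    0 ≤ newSol x p := by
  unfold newSol
  split
  · exact h0 p
  · split
    · exact h0 _
    · exact le_refl 0

lemma newSol_of_one_le {x : Fin c × Finset (Fin n) → ℝ} {p} (h : 1 ≤ x p) :
    newSol x p = x p := if_pos h

lemma newSol_pos_cases {x : Fin c × Finset (Fin n) → ℝ} {p} (h : newSol x p ≠ 0) :
    (1 ≤ x p ∧ newSol x p = x p) ∨
    ∃ s, FracCol x (p.1, s) ∧ truncX x s = p.2 ∧ p.2.Nonempty ∧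
      (¬ ∃ i, 1 ≤ x (i, p.2)) ∧ newSol x p = x (p.1, s) := by
  unfold newSol at h ⊢
  by_cases h1 : 1 ≤ x p
  · exact Or.inl ⟨h1, if_pos h1⟩
  · rw [if_neg h1] at h ⊢
    by_cases h2 : ∃ s, FracCol x (p.1, s) ∧ truncX x s = p.2 ∧ p.2.Nonempty ∧
        ¬ ∃ i, 1 ≤ x (i, p.2)
    · obtain ⟨hf, ht, hne, hh⟩ := h2.choose_spec
      exact Or.inr ⟨h2.choose, hf, ht, hne, hh, dif_pos h2⟩
    · rw [dif_neg h2] at h; exact absurd rfl h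

lemma newSol_frac_cases {x : Fin c × Finset (Fin n) → ℝ} {p} (h : FracCol (newSol x) p) :
    ∃ s, FracCol x (p.1, s) ∧ truncX x s = p.2 ∧ p.2.Nonempty ∧
      (¬ ∃ i, 1 ≤ x (i, p.2)) ∧ newSol x p = x (p.1, s) := by
  rcases newSol_pos_cases (ne_of_gt h.1) with ⟨h1, he⟩ | h2
  · have h2 := h.2
    rw [he] at h2
    exact absurd h2 (not_lt.2 h1)
  · exact h2

lemma newSol_eval_target {x : Fin c × Finset (Fin n) → ℝ}
    (hsucc : ∀ j ∈ Jf x, ∀ s s' : Finset (Fin n),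
      FracSched x s → FracSched x s' → j ∈ s → j ∈ s' → succIn s j = succIn s' j)
    {i : Fin c} {S : Finset (Fin n)} (hS : FracSched x S) {j : Fin n}
    (hj : j ∈ truncX x S) (hheavy : ¬ ∃ i0, 1 ≤ x (i0, truncX x S)) :
    newSol x (i, truncX x S) = if FracCol x (i, S) then x (i, S) else 0 := by
  have h1 : ¬ 1 ≤ x (i, truncX x S) := fun h => hheavy ⟨i, h⟩
  by_cases hf : FracCol x (i, S)
  · have hsrc : ∃ s, FracCol x ((i, truncX x S).1, s) ∧ truncX x s = (i, truncX x S).2 ∧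
        (i, truncX x S).2.Nonempty ∧ ¬ ∃ i0, 1 ≤ x (i0, (i, truncX x S).2) :=
      ⟨S, hf, rfl, ⟨j, hj⟩, hheavy⟩
    rw [newSol, if_neg h1, dif_pos hsrc, if_pos hf]
    obtain ⟨hf2, ht2, -, -⟩ := hsrc.choose_spec
    have he : hsrc.choose = S :=
      trunc_inj x hsucc ⟨i, hf2⟩ hS (by rw [ht2]; exact hj) hj
    rw [he]
  · have hsrc : ¬ ∃ s, FracCol x ((i, truncX x S).1, s) ∧ truncX x s = (i, truncX x S).2 ∧
        (i, truncX x S).2.Nonempty ∧ ¬ ∃ i0, 1 ≤ x (i0, (i, truncX x S).2) := by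
      rintro ⟨s, hf2, ht2, -, -⟩
      have he : s = S := trunc_inj x hsucc ⟨i, hf2⟩ hS (by rw [ht2]; exact hj) hj
      rw [he] at hf2
      exact hf hf2
    rw [newSol, if_neg h1, dif_neg hsrc, if_neg hf]

lemma target_sum_ge_one {x : Fin c × Finset (Fin n) → ℝ}
    (hsucc : ∀ j ∈ Jf x, ∀ s s' : Finset (Fin n),
      FracSched x s → FracSched x s' → j ∈ s → j ∈ s' → succIn s j = succIn s' j)
    (hstar : StarCond x) {j : Fin n} (hjf : j ∈ Jf x) {S : Finset (Fin n)}
    (hS : FracSched x S) (hj : j ∈ truncX x S)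
    (hheavy : ¬ ∃ i0, 1 ≤ x (i0, truncX x S)) :
    (1:ℝ) ≤ ∑ i : Fin c, newSol x (i, truncX x S) := by
  obtain ⟨hjS, hcS⟩ := mem_trunc.1 hj
  have hset : ∀ p : Fin c × Finset (Fin n),
      (FracCol x p ∧ j ∈ p.2 ∧ CanonX x p.2 j) ↔ (p.2 = S ∧ FracCol x p) := by
    intro p
    constructor
    · rintro ⟨hf, hjm, hcj⟩
      exact ⟨canon_sched_unique x hsucc ⟨p.1, hf⟩ hS hjm hjS hcj hcS, hf⟩
    · rintro ⟨rfl, hf⟩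
      exact ⟨hf, hjS, hcS⟩
  calc (1:ℝ) ≤ ∑ p : Fin c × Finset (Fin n),
        if FracCol x p ∧ j ∈ p.2 ∧ CanonX x p.2 j then x p else 0 :=
      canon_weight x hsucc hstar j hjf
    _ = ∑ p : Fin c × Finset (Fin n), if p.2 = S then (if FracCol x p then x p else 0) else 0 := by
      refine Finset.sum_congr rfl fun p _ => ?_
      by_cases h1 : p.2 = S
      · rw [if_pos h1]
        by_cases h2 : FracCol x p
        · rw [if_pos ((hset p).2 ⟨h1, h2⟩), if_pos h2]
        · rw [if_neg h2, if_neg (fun hc => h2 (((hset p).1 hc).2))]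
      · rw [if_neg h1, if_neg (fun hc => h1 ((hset p).1 hc).1)]
    _ = ∑ i : Fin c, (if FracCol x (i, S) then x (i, S) else 0) :=
      sum_snd_eq S (fun p => if FracCol x p then x p else 0)
    _ = ∑ i : Fin c, newSol x (i, truncX x S) :=
      Finset.sum_congr rfl fun i _ => (newSol_eval_target hsucc hS hj hheavy).symm
/-- The prefix-exchange map used for the cost comparison. -/
noncomputable def gMap (x : Fin c × Finset (Fin n) → ℝ) :
    Fin c × Finset (Fin n) → Fin c × Finset (Fin n) := fun p =>
  if 1 ≤ x p then p
  else if h : ∃ s, FracCol x (p.1, s) ∧ truncX x s = p.2 ∧ p.2.Nonempty ∧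
      ¬ ∃ i, 1 ≤ x (i, p.2) then (p.1, h.choose) else p

lemma gMap_spec {x : Fin c × Finset (Fin n) → ℝ} {p} (h : newSol x p ≠ 0) :
    (gMap x p).1 = p.1 ∧ x (gMap x p) = newSol x p ∧
    ((1 ≤ x p ∧ gMap x p = p) ∨
      (FracCol x (gMap x p) ∧ truncX x (gMap x p).2 = p.2)) := by
  by_cases h1 : 1 ≤ x p
  · have hg : gMap x p = p := if_pos h1
    rw [hg, newSol_of_one_le h1]
    exact ⟨rfl, rfl, Or.inl ⟨h1, rfl⟩⟩
  · by_cases h2 : ∃ s, FracCol x (p.1, s) ∧ truncX x s = p.2 ∧ p.2.Nonempty ∧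
        ¬ ∃ i, 1 ≤ x (i, p.2)
    · have hg : gMap x p = (p.1, h2.choose) := by rw [gMap, if_neg h1, dif_pos h2]
      have hv : newSol x p = x (p.1, h2.choose) := by rw [newSol, if_neg h1, dif_pos h2]
      obtain ⟨hf, ht, -, -⟩ := h2.choose_spec
      rw [hg, hv]
      exact ⟨rfl, rfl, Or.inr ⟨hf, ht⟩⟩
    · have : newSol x p = 0 := by rw [newSol, if_neg h1, dif_neg h2]
      exact absurd this h

lemma gMap_inj {x : Fin c × Finset (Fin n) → ℝ} {p1 p2}
    (h1 : newSol x p1 ≠ 0) (h2 : newSol x p2 ≠ 0) (he : gMap x p1 = gMap x p2) :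
    p1 = p2 := by
  obtain ⟨hf1, hv1, hc1⟩ := gMap_spec h1
  obtain ⟨hf2, hv2, hc2⟩ := gMap_spec h2
  rcases hc1 with ⟨hge1, hg1⟩ | ⟨hfc1, ht1⟩ <;> rcases hc2 with ⟨hge2, hg2⟩ | ⟨hfc2, ht2⟩
  · rw [← hg1, ← hg2, he]
  · exfalso
    have : 1 ≤ x (gMap x p2) := by rw [← he, hg1]; exact hge1
    exact absurd this (not_le.2 hfc2.2)
  · exfalso
    have : 1 ≤ x (gMap x p1) := by rw [he, hg2]; exact hge2
    exact absurd this (not_le.2 hfc1.2)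
  · have hfst : p1.1 = p2.1 := by rw [← hf1, ← hf2, he]
    have hsnd : p1.2 = p2.2 := by rw [← ht1, ← ht2, he]
    exact Prod.ext hfst hsnd

end SameSuccAux

open SameSuccAux in
theorem same_successor_implies_same_pred_succ {n c : ℕ} (r d : Fin n → ℝ) (L : ℝ) (𝒥 : Fin c → Set (Fin n)) (w : Fin c → ℝ)
    (hrd : ∀ j, r j ≤ d j) (hmono : ∀ j k : Fin n, j ≤ k → r j ≤ r k)
    (hL : 0 < L) (hw : ∀ i, 0 < w i)
    (x : Fin c × Finset (Fin n) → ℝ)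
    (hopt : Optimal r d L 𝒥 w x) (hstar : StarCond x)
    (hsucc : ∀ j ∈ Jf x, ∀ s s' : Finset (Fin n),
      FracSched x s → FracSched x s' → j ∈ s → j ∈ s' → succIn s j = succIn s' j) :
    ∃ x' : Fin c × Finset (Fin n) → ℝ,
      Optimal r d L 𝒥 w x' ∧ StarCond x' ∧
      ∀ j ∈ Jf x', ∀ s s' : Finset (Fin n),
        FracSched x' s → FracSched x' s' → j ∈ s → j ∈ s' →
          predIn s j = predIn s' j ∧ succIn s j = succIn s' j := by
  classical
  obtain ⟨⟨hx0, hxsched, hxcov⟩, hxopt⟩ := hopt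
  -- Feasibility of the truncated solution
  have hfeas : Feasible r d L 𝒥 (newSol x) := by
    refine ⟨newSol_nonneg hx0, ?_, ?_⟩
    · -- support condition
      intro p hp
      rcases newSol_pos_cases (ne_of_gt hp) with ⟨h1, he⟩ | ⟨s, hf, ht, hne, -, -⟩
      · exact hxsched p (by linarith)
      · obtain ⟨-, hcomp, hmem⟩ := hxsched (p.1, s) hf.1
        rw [← ht] at hne ⊢
        refine ⟨hne, ?_, ?_⟩
        · intro a ha b hb hab
          exact hcomp a (mem_trunc.1 ha).1 b (mem_trunc.1 hb).1 hab
        · intro a ha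
          exact hmem a (mem_trunc.1 ha).1
    · -- covering condition
      intro j
      by_cases hjf : j ∈ Jf x
      · obtain ⟨S, hS, hjT⟩ := exists_canon x hsucc hstar hjf
        by_cases hheavy : ∃ i0, 1 ≤ x (i0, truncX x S)
        · obtain ⟨i0, hi0⟩ := hheavy
          have hval : (1:ℝ) ≤ newSol x (i0, truncX x S) := by
            rw [newSol_of_one_le hi0]; exact hi0
          have hle : (if j ∈ truncX x S then newSol x (i0, truncX x S) else 0) ≤
              ∑ p : Fin c × Finset (Fin n), if j ∈ p.2 then newSol x p else 0 :=
            Finset.single_le_sum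
              (f := fun p : Fin c × Finset (Fin n) => if j ∈ p.2 then newSol x p else 0)
              (fun p _ => by
                show (0:ℝ) ≤ if j ∈ p.2 then newSol x p else 0
                by_cases hm : j ∈ p.2
                · rw [if_pos hm]; exact newSol_nonneg hx0 p
                · rw [if_neg hm])
              (Finset.mem_univ (i0, truncX x S))
          rw [if_pos hjT] at hle
          linarith
        · calc (1:ℝ) ≤ ∑ i : Fin c, newSol x (i, truncX x S) :=
              target_sum_ge_one hsucc hstar hjf hS hjT hheavy
            _ = ∑ p : Fin c × Finset (Fin n),
                if p.2 = truncX x S then newSol x p else 0 := (sum_snd_eq _ _).symm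
            _ ≤ ∑ p : Fin c × Finset (Fin n), if j ∈ p.2 then newSol x p else 0 := by
              refine Finset.sum_le_sum fun p _ => ?_
              by_cases hp2 : p.2 = truncX x S
              · rw [if_pos hp2, if_pos (by rw [hp2]; exact hjT)]
              · rw [if_neg hp2]
                by_cases hm : j ∈ p.2
                · rw [if_pos hm]; exact newSol_nonneg hx0 p
                · rw [if_neg hm]
      · calc (1:ℝ) ≤ ∑ p : Fin c × Finset (Fin n), if j ∈ p.2 then x p else 0 := hxcov j
          _ ≤ ∑ p : Fin c × Finset (Fin n), if j ∈ p.2 then newSol x p else 0 := by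
            refine Finset.sum_le_sum fun p _ => ?_
            by_cases hm : j ∈ p.2
            · rw [if_pos hm, if_pos hm]
              by_cases h1 : 1 ≤ x p
              · rw [newSol_of_one_le h1]
              · have hpos : ¬ 0 < x p := fun hpos =>
                  hjf ⟨p.2, ⟨p.1, hpos, not_le.1 h1⟩, hm⟩
                have h0 : x p = 0 := le_antisymm (not_lt.1 hpos) (hx0 p)
                rw [h0]; exact newSol_nonneg hx0 p
            · rw [if_neg hm, if_neg hm]
  -- cost comparison
  have hcost : cost w (newSol x) ≤ cost w x := by
    have hAsub : (Finset.univ.filter (fun p : Fin c × Finset (Fin n) => newSol x p ≠ 0))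
        ⊆ Finset.univ := Finset.subset_univ _
    have e1 : cost w (newSol x) =
        ∑ p ∈ Finset.univ.filter (fun p : Fin c × Finset (Fin n) => newSol x p ≠ 0),
          w p.1 * newSol x p := by
      rw [cost]
      refine (Finset.sum_subset hAsub ?_).symm
      intro p _ hp
      rw [Finset.mem_filter, not_and] at hp
      have : newSol x p = 0 := by
        by_contra hne; exact (hp (Finset.mem_univ p)) hne
      rw [this, mul_zero]
    have e2 : (∑ p ∈ Finset.univ.filter
          (fun p : Fin c × Finset (Fin n) => newSol x p ≠ 0), w p.1 * newSol x p) =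
        ∑ p ∈ Finset.univ.filter
          (fun p : Fin c × Finset (Fin n) => newSol x p ≠ 0),
          w (gMap x p).1 * x (gMap x p) := by
      refine Finset.sum_congr rfl fun p hp => ?_
      rw [Finset.mem_filter] at hp
      obtain ⟨hf, hv, -⟩ := gMap_spec hp.2
      rw [hf, hv]
    have e3 : (∑ p ∈ Finset.univ.filter
          (fun p : Fin c × Finset (Fin n) => newSol x p ≠ 0),
          w (gMap x p).1 * x (gMap x p)) =
        ∑ q ∈ (Finset.univ.filter
          (fun p : Fin c × Finset (Fin n) => newSol x p ≠ 0)).image (gMap x),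
          w q.1 * x q := by
      refine (Finset.sum_image (f := fun q : Fin c × Finset (Fin n) => w q.1 * x q)
        (g := gMap x) ?_).symm
      intro p1 hp1 p2 hp2 he
      rw [Finset.mem_coe, Finset.mem_filter] at hp1 hp2
      exact gMap_inj hp1.2 hp2.2 he
    rw [e1, e2, e3, cost]
    refine Finset.sum_le_sum_of_subset_of_nonneg (Finset.subset_univ _) ?_
    intro q _ _
    exact mul_nonneg (le_of_lt (hw q.1)) (hx0 q)
  refine ⟨newSol x, ⟨hfeas, fun y hy => le_trans hcost (hxopt y hy)⟩, ?_, ?_⟩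
  · -- Condition (⋆) for the new solution
    intro j hjf'
    obtain ⟨s1, ⟨i1, hfc1⟩, hj1⟩ := hjf'
    obtain ⟨S1, hfS1, ht1, -, hheavy1, -⟩ := newSol_frac_cases hfc1
    have hS1 : FracSched x S1 := ⟨i1, hfS1⟩
    have hjT : j ∈ truncX x S1 := by rw [ht1]; exact hj1
    have hjf : j ∈ Jf x := ⟨S1, hS1, (mem_trunc.1 hjT).1⟩
    have hheavy : ¬ ∃ i0, 1 ≤ x (i0, truncX x S1) := by rw [ht1]; exact hheavy1
    calc (1:ℝ) ≤ ∑ i : Fin c, newSol x (i, truncX x S1) :=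
        target_sum_ge_one hsucc hstar hjf hS1 hjT hheavy
      _ = ∑ p : Fin c × Finset (Fin n),
          if p.2 = truncX x S1 then newSol x p else 0 := (sum_snd_eq _ _).symm
      _ = ∑ p : Fin c × Finset (Fin n),
          if FracCol (newSol x) p ∧ j ∈ p.2 then newSol x p else 0 := by
        refine Finset.sum_congr rfl fun p _ => ?_
        by_cases hp2 : p.2 = truncX x S1
        · rw [if_pos hp2]
          by_cases hfp : FracCol (newSol x) p
          · rw [if_pos ⟨hfp, by rw [hp2]; exact hjT⟩]
          · rw [if_neg (fun hc => hfp hc.1)]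
            by_contra h0
            rcases newSol_pos_cases h0 with ⟨hge, -⟩ | ⟨s, hfc, ht, -, -, heq⟩
            · exact hheavy ⟨p.1, by rw [← hp2]; exact hge⟩
            · exact hfp ⟨by rw [heq]; exact hfc.1, by rw [heq]; exact hfc.2⟩
        · rw [if_neg hp2, if_neg]
          rintro ⟨hfp, hjp⟩
          obtain ⟨S2, hfS2, ht2, -, -, -⟩ := newSol_frac_cases hfp
          have hSe : S2 = S1 :=
            trunc_inj x hsucc ⟨p.1, hfS2⟩ hS1 (by rw [ht2]; exact hjp) hjT
          exact hp2 (by rw [← ht2, hSe])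
  · -- uniqueness of predecessors and successors
    intro j hjf' s s' hfs hfs' hjs hjs'
    obtain ⟨i1, hfc1⟩ := hfs
    obtain ⟨i2, hfc2⟩ := hfs'
    obtain ⟨S1, hfS1, ht1, -, -, -⟩ := newSol_frac_cases hfc1
    obtain ⟨S2, hfS2, ht2, -, -, -⟩ := newSol_frac_cases hfc2
    have hSe : S1 = S2 :=
      trunc_inj x hsucc ⟨i1, hfS1⟩ ⟨i2, hfS2⟩ (by rw [ht1]; exact hjs)
        (by rw [ht2]; exact hjs')
    have ht1' : truncX x S1 = s := ht1
    have ht2' : truncX x S2 = s' := ht2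
    have hse : s = s' := by rw [← ht1', ← ht2', hSe]
    exact ⟨by rw [hse], by rw [hse]⟩
end

section
/- Let x be an optimal feasible solution satisfying condition (⋆). Suppose that every job j ∈ 𝒥_f(x) has both the same immediate predecessor and the same immediate successor (possibly dummy) in every fractional schedule of x containing j. Then there exists a feasible integral solution whose cost equals the cost of x; in particular, some optimal feasible solution is integral. -/
open scoped Classical BigOperators

lemma succIn_eq {n : ℕ} {s : Finset (Fin n)} {m k : Fin n}
    (hk : k ∈ s) (hmk : m < k) (hmin : ∀ b ∈ s, m < b → k ≤ b) :
    succIn s m = (k : WithTop (Fin n)) := by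
  apply le_antisymm
  · exact Finset.min_le (Finset.mem_filter.2 ⟨hk, hmk⟩)
  · apply Finset.le_min
    intro b hb
    rcases Finset.mem_filter.1 hb with ⟨hbs, hmb⟩
    exact_mod_cast hmin b hbs hmb

lemma predIn_eq {n : ℕ} {s : Finset (Fin n)} {m k : Fin n}
    (hk : k ∈ s) (hkm : k < m) (hmax : ∀ b ∈ s, b < m → b ≤ k) :
    predIn s m = (k : WithBot (Fin n)) := by
  apply le_antisymm
  · apply Finset.max_le
    intro b hb
    rcases Finset.mem_filter.1 hb with ⟨hbs, hbm⟩
    exact_mod_cast hmax b hbs hbm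
  · exact Finset.le_max (Finset.mem_filter.2 ⟨hk, hkm⟩)

lemma mem_of_succIn_eq {n : ℕ} {s : Finset (Fin n)} {m k : Fin n}
    (h : succIn s m = (k : WithTop (Fin n))) : k ∈ s :=
  (Finset.mem_filter.1 (Finset.mem_of_min h)).1

lemma mem_of_predIn_eq {n : ℕ} {s : Finset (Fin n)} {m k : Fin n}
    (h : predIn s m = (k : WithBot (Fin n))) : k ∈ s :=
  (Finset.mem_filter.1 (Finset.mem_of_max h)).1

lemma fracSched_up {n c : ℕ} {x : Fin c × Finset (Fin n) → ℝ}
    (hps : ∀ j ∈ Jf x, ∀ s s' : Finset (Fin n),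
      FracSched x s → FracSched x s' → j ∈ s → j ∈ s' →
        predIn s j = predIn s' j ∧ succIn s j = succIn s' j)
    {s s' : Finset (Fin n)} (hs : FracSched x s) (hs' : FracSched x s')
    {j : Fin n} (hj : j ∈ s) (hj' : j ∈ s') :
    ∀ k : Fin n, j ≤ k → k ∈ s → k ∈ s' := by
  have hJf : ∀ k ∈ s, k ∈ Jf x := fun k hk => ⟨s, hs, hk⟩
  suffices H : ∀ m : ℕ, ∀ k : Fin n, k.val ≤ m → j ≤ k → k ∈ s → k ∈ s' by
    exact fun k hjk hk => H k.val k le_rfl hjk hk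
  intro m
  induction m with
  | zero =>
    intro k hk hjk hks
    have : j = k := le_antisymm hjk (by rw [Fin.le_def]; omega)
    exact this ▸ hj'
  | succ m IH =>
    intro k hk hjk hks
    rcases eq_or_lt_of_le hjk with rfl | hlt
    · exact hj'
    · have hjt : j ∈ s.filter (fun b => b < k) := Finset.mem_filter.2 ⟨hj, hlt⟩
      obtain ⟨p, hp⟩ := Finset.max_of_nonempty ⟨j, hjt⟩
      have hpt := Finset.mem_of_max hp
      obtain ⟨hpss, hpk⟩ := Finset.mem_filter.1 hpt
      have hjp : j ≤ p := by
        have h1 := Finset.le_max hjt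
        rw [hp] at h1
        exact_mod_cast h1
      have hp' : p ∈ s' := IH p (by have := Fin.lt_def.1 hpk; omega) hjp hpss
      have hsucc : succIn s p = (k : WithTop (Fin n)) := by
        refine succIn_eq hks hpk (fun b hb hpb => ?_)
        by_contra hbk
        push_neg at hbk
        have hbt : b ∈ s.filter (fun b => b < k) := Finset.mem_filter.2 ⟨hb, hbk⟩
        have h2 := Finset.le_max hbt
        rw [hp] at h2
        have : b ≤ p := by exact_mod_cast h2
        exact absurd hpb (not_lt.2 this)
      have heq := (hps p (hJf p hpss) s s' hs hs' hpss hp').2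
      rw [hsucc] at heq
      exact mem_of_succIn_eq heq.symm

lemma fracSched_down {n c : ℕ} {x : Fin c × Finset (Fin n) → ℝ}
    (hps : ∀ j ∈ Jf x, ∀ s s' : Finset (Fin n),
      FracSched x s → FracSched x s' → j ∈ s → j ∈ s' →
        predIn s j = predIn s' j ∧ succIn s j = succIn s' j)
    {s s' : Finset (Fin n)} (hs : FracSched x s) (hs' : FracSched x s')
    {j : Fin n} (hj : j ∈ s) (hj' : j ∈ s') :
    ∀ k : Fin n, k ≤ j → k ∈ s → k ∈ s' := by
  have hJf : ∀ k ∈ s, k ∈ Jf x := fun k hk => ⟨s, hs, hk⟩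
  suffices H : ∀ m : ℕ, ∀ k : Fin n, j.val - k.val ≤ m → k ≤ j → k ∈ s → k ∈ s' by
    exact fun k hkj hk => H (j.val - k.val) k le_rfl hkj hk
  intro m
  induction m with
  | zero =>
    intro k hk hkj hks
    have : k = j := le_antisymm hkj (by rw [Fin.le_def]; omega)
    exact this ▸ hj'
  | succ m IH =>
    intro k hk hkj hks
    rcases eq_or_lt_of_le hkj with rfl | hlt
    · exact hj'
    · have hjt : j ∈ s.filter (fun b => k < b) := Finset.mem_filter.2 ⟨hj, hlt⟩
      obtain ⟨q, hq⟩ := Finset.min_of_nonempty ⟨j, hjt⟩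
      have hqt := Finset.mem_of_min hq
      obtain ⟨hqss, hkq⟩ := Finset.mem_filter.1 hqt
      have hqj : q ≤ j := by
        have h1 := Finset.min_le hjt
        rw [hq] at h1
        exact_mod_cast h1
      have hq' : q ∈ s' := IH q (by have := Fin.lt_def.1 hkq; have := Fin.le_def.1 hqj; omega) hqj hqss
      have hpred : predIn s q = (k : WithBot (Fin n)) := by
        refine predIn_eq hks hkq (fun b hb hbq => ?_)
        by_contra hbk
        push_neg at hbk
        have hbt : b ∈ s.filter (fun b => k < b) := Finset.mem_filter.2 ⟨hb, hbk⟩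
        have h2 := Finset.min_le hbt
        rw [hq] at h2
        have : q ≤ b := by exact_mod_cast h2
        exact absurd hbq (not_lt.2 this)
      have heq := (hps q (hJf q hqss) s s' hs hs' hqss hq').1
      rw [hpred] at heq
      exact mem_of_predIn_eq heq.symm

lemma fracSched_unique {n c : ℕ} {x : Fin c × Finset (Fin n) → ℝ}
    (hps : ∀ j ∈ Jf x, ∀ s s' : Finset (Fin n),
      FracSched x s → FracSched x s' → j ∈ s → j ∈ s' →
        predIn s j = predIn s' j ∧ succIn s j = succIn s' j)
    {s s' : Finset (Fin n)} (hs : FracSched x s) (hs' : FracSched x s')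
    {j : Fin n} (hj : j ∈ s) (hj' : j ∈ s') : s = s' := by
  ext k
  constructor
  · intro hk
    rcases le_total j k with h | h
    · exact fracSched_up hps hs hs' hj hj' k h hk
    · exact fracSched_down hps hs hs' hj hj' k h hk
  · intro hk
    rcases le_total j k with h | h
    · exact fracSched_up hps hs' hs hj' hj k h hk
    · exact fracSched_down hps hs' hs hj' hj k h hk

theorem same_pred_succ_implies_integral_optimum {n c : ℕ} (r d : Fin n → ℝ) (L : ℝ) (𝒥 : Fin c → Set (Fin n)) (w : Fin c → ℝ)
    (hrd : ∀ j, r j ≤ d j) (hmono : ∀ j k : Fin n, j ≤ k → r j ≤ r k)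
    (hL : 0 < L) (hw : ∀ i, 0 < w i)
    (x : Fin c × Finset (Fin n) → ℝ)
    (hopt : Optimal r d L 𝒥 w x) (hstar : StarCond x)
    (hps : ∀ j ∈ Jf x, ∀ s s' : Finset (Fin n),
      FracSched x s → FracSched x s' → j ∈ s → j ∈ s' →
        predIn s j = predIn s' j ∧ succIn s j = succIn s' j) :
    ∃ x' : Fin c × Finset (Fin n) → ℝ,
      Feasible r d L 𝒥 x' ∧ Integral x' ∧ cost w x' = cost w x ∧
      Optimal r d L 𝒥 w x' := by
  obtain ⟨hfeas, hmin⟩ := hopt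
  obtain ⟨hnn, hsupp, hcov⟩ := hfeas
  rcases Nat.eq_zero_or_pos c with hc | hc
  · -- no machine classes: everything vacuous, x itself is integral
    refine ⟨x, ⟨hnn, hsupp, hcov⟩, ?_, rfl, ⟨hnn, hsupp, hcov⟩, hmin⟩
    intro p
    exact absurd p.1.isLt (by omega)
  -- pick the cheapest class for each fractional schedule
  have hex : ∀ s : Finset (Fin n), ∃ i : Fin c,
      FracSched x s → FracCol x (i, s) ∧ ∀ i', FracCol x (i', s) → w i ≤ w i' := by
    intro s
    by_cases h : FracSched x s
    · obtain ⟨i₁, hi₁⟩ := h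
      have hne : (Finset.univ.filter (fun i => FracCol x (i, s))).Nonempty :=
        ⟨i₁, Finset.mem_filter.2 ⟨Finset.mem_univ _, hi₁⟩⟩
      obtain ⟨i, hi, hmin'⟩ := Finset.exists_min_image _ w hne
      exact ⟨i, fun _ => ⟨(Finset.mem_filter.1 hi).2,
        fun i' hi' => hmin' i' (Finset.mem_filter.2 ⟨Finset.mem_univ _, hi'⟩)⟩⟩
    · exact ⟨⟨0, hc⟩, fun hh => absurd hh h⟩
  choose pick hpick using hex
  set x' : Fin c × Finset (Fin n) → ℝ :=
    fun p => if 1 ≤ x p then 1 else if FracCol x p ∧ p.1 = pick p.2 then 1 else 0 with hx'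
  -- helper: swap sums over the product
  have sum_swap : ∀ f : Fin c × Finset (Fin n) → ℝ,
      ∑ p : Fin c × Finset (Fin n), f p = ∑ s : Finset (Fin n), ∑ i : Fin c, f (i, s) := by
    intro f
    rw [Fintype.sum_prod_type]
    exact Finset.sum_comm
  -- basic properties of x'
  have hx'nn : ∀ p, 0 ≤ x' p := by
    intro p
    simp only [hx']
    split_ifs <;> norm_num
  have hx'int : ∀ p, x' p = 0 ∨ x' p = 1 := by
    intro p
    simp only [hx']
    split_ifs <;> simp
  have hx'supp : ∀ p, 0 < x' p → IsSchedule r d L 𝒥 p.1 p.2 := by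
    intro p hp
    simp only [hx'] at hp
    split_ifs at hp with h1 h2
    · exact hsupp p (lt_of_lt_of_le one_pos h1)
    · exact hsupp p h2.1.1
    · exact absurd hp (lt_irrefl 0)
  -- coverage
  have hx'cov : ∀ j : Fin n, 1 ≤ ∑ p : Fin c × Finset (Fin n), if j ∈ p.2 then x' p else 0 := by
    intro j
    have hterm_nn : ∀ p ∈ Finset.univ (α := Fin c × Finset (Fin n)),
        (0:ℝ) ≤ if j ∈ p.2 then x' p else 0 := by
      intro p _
      split_ifs
      · exact hx'nn p
      · exact le_rfl
    by_cases hj : j ∈ Jf x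
    · obtain ⟨s₀, hs₀, hjs₀⟩ := hj
      obtain ⟨hfc, _⟩ := hpick s₀ hs₀
      have hq : (if j ∈ ((pick s₀, s₀) : Fin c × Finset (Fin n)).2 then x' (pick s₀, s₀) else 0) = 1 := by
        have h1 : ¬ (1 ≤ x (pick s₀, s₀)) := not_le.2 hfc.2
        rw [if_pos hjs₀]
        simp [hx', h1, hfc]
      calc (1:ℝ) = _ := hq.symm
        _ ≤ _ := Finset.single_le_sum hterm_nn (Finset.mem_univ _)
    · -- some column covering j has x p ≥ 1
      have hex1 : ∃ p : Fin c × Finset (Fin n), j ∈ p.2 ∧ 1 ≤ x p := by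
        by_contra hcon
        push_neg at hcon
        have hzero : ∀ p : Fin c × Finset (Fin n), j ∈ p.2 → x p = 0 := by
          intro p hp
          by_contra hne
          have hpos : 0 < x p := lt_of_le_of_ne (hnn p) (Ne.symm hne)
          exact hj ⟨p.2, ⟨p.1, hpos, hcon p hp⟩, hp⟩
        have : (∑ p : Fin c × Finset (Fin n), if j ∈ p.2 then x p else 0) = 0 := by
          apply Finset.sum_eq_zero
          intro p _
          split_ifs with h
          · exact hzero p h
          · rfl
        have h1 := hcov j
        rw [this] at h1
        linarith
      obtain ⟨p, hjp, h1p⟩ := hex1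
      have hq : (if j ∈ p.2 then x' p else 0) = 1 := by
        rw [if_pos hjp]
        simp only [hx']
        rw [if_pos h1p]
      calc (1:ℝ) = _ := hq.symm
        _ ≤ _ := Finset.single_le_sum hterm_nn (Finset.mem_univ _)
  -- cost comparison
  have hcost_le : cost w x' ≤ cost w x := by
    unfold cost
    rw [sum_swap (fun p => w p.1 * x' p), sum_swap (fun p => w p.1 * x p)]
    apply Finset.sum_le_sum
    intro s _
    by_cases hfs : FracSched x s
    · -- fractional schedule case
      obtain ⟨hfc₀, hmin₀⟩ := hpick s hfs
      have hnot1 : ¬ (1 ≤ x (pick s, s)) := not_le.2 hfc₀.2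
      -- get a job of s and use the star condition
      obtain ⟨j, hjs⟩ := (hsupp ((pick s), s) hfc₀.1).1
      have hjJf : j ∈ Jf x := ⟨s, hfs, hjs⟩
      have hstar_j := hstar j hjJf
      have hsum_eq : (∑ p : Fin c × Finset (Fin n), if FracCol x p ∧ j ∈ p.2 then x p else 0)
          = ∑ i : Fin c, if FracCol x (i, s) then x (i, s) else 0 := by
        rw [sum_swap (fun p => if FracCol x p ∧ j ∈ p.2 then x p else 0)]
        rw [Finset.sum_eq_single_of_mem s (Finset.mem_univ s)]
        · apply Finset.sum_congr rfl
          intro i _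
          by_cases h : FracCol x (i, s)
          · rw [if_pos ⟨h, hjs⟩, if_pos h]
          · rw [if_neg (fun hh => h hh.1), if_neg h]
        · intro s' _ hne
          apply Finset.sum_eq_zero
          intro i _
          rw [if_neg]
          rintro ⟨hfc', hjmem⟩
          exact hne (fracSched_unique hps ⟨i, hfc'⟩ hfs hjmem hjs)
      have hSf : 1 ≤ ∑ i : Fin c, if FracCol x (i, s) then x (i, s) else 0 := by
        rw [← hsum_eq]; exact hstar_j
      -- LHS = S1 + w (pick s)
      have hx'eq : ∀ i : Fin c, x' (i, s)
          = (if 1 ≤ x (i, s) then 1 else 0) + (if i = (pick s) then 1 else 0) := by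
        intro i
        by_cases h1 : 1 ≤ x (i, s)
        · have hne : i ≠ (pick s) := by rintro rfl; exact hnot1 h1
          simp [hx', h1, hne]
        · by_cases h2 : i = (pick s)
          · subst h2
            simp [hx', h1, hfc₀]
          · simp [hx', h1, h2]
      have hLHS : (∑ i : Fin c, w i * x' (i, s))
          = (∑ i : Fin c, if 1 ≤ x (i, s) then w i else 0) + w (pick s) := by
        calc (∑ i : Fin c, w i * x' (i, s))
            = ∑ i : Fin c, ((if 1 ≤ x (i, s) then w i else 0) + (if i = (pick s) then w i else 0)) := by
              apply Finset.sum_congr rfl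
              intro i _
              rw [hx'eq i, mul_add]
              congr 1 <;> · split_ifs <;> ring
          _ = (∑ i : Fin c, if 1 ≤ x (i, s) then w i else 0)
              + (∑ i : Fin c, if i = (pick s) then w i else 0) := Finset.sum_add_distrib
          _ = _ := by rw [Finset.sum_ite_eq' Finset.univ (pick s) w, if_pos (Finset.mem_univ (pick s))]
      rw [hLHS]
      have hwpick : w (pick s) ≤ ∑ i : Fin c, if FracCol x (i, s) then w (pick s) * x (i, s) else 0 := by
        have : (∑ i : Fin c, if FracCol x (i, s) then w (pick s) * x (i, s) else 0)
            = w (pick s) * ∑ i : Fin c, if FracCol x (i, s) then x (i, s) else 0 := by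
          rw [Finset.mul_sum]
          apply Finset.sum_congr rfl
          intro i _
          split_ifs <;> ring
        rw [this]
        nlinarith [hw (pick s), hSf]
      have htermwise : (∑ i : Fin c, ((if 1 ≤ x (i, s) then w i else 0)
            + (if FracCol x (i, s) then w (pick s) * x (i, s) else 0)))
          ≤ ∑ i : Fin c, w i * x (i, s) := by
        apply Finset.sum_le_sum
        intro i _
        by_cases h1 : 1 ≤ x (i, s)
        · have h2 : ¬ FracCol x (i, s) := fun h => absurd h1 (not_le.2 h.2)
          rw [if_pos h1, if_neg h2]
          nlinarith [hw i, h1]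
        · by_cases h2 : FracCol x (i, s)
          · rw [if_neg h1, if_pos h2]
            have := mul_le_mul_of_nonneg_right (hmin₀ i h2) h2.1.le
            linarith
          · rw [if_neg h1, if_neg h2]
            have hxnn : 0 ≤ x (i, s) := hnn (i, s)
            nlinarith [(hw i).le]
      calc (∑ i : Fin c, if 1 ≤ x (i, s) then w i else 0) + w (pick s)
          ≤ (∑ i : Fin c, if 1 ≤ x (i, s) then w i else 0)
            + ∑ i : Fin c, (if FracCol x (i, s) then w (pick s) * x (i, s) else 0) := by linarith
        _ = ∑ i : Fin c, ((if 1 ≤ x (i, s) then w i else 0)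
            + (if FracCol x (i, s) then w (pick s) * x (i, s) else 0)) := Finset.sum_add_distrib.symm
        _ ≤ _ := htermwise
    · -- no fractional column on s
      apply Finset.sum_le_sum
      intro i _
      have hnofc : ¬ FracCol x (i, s) := fun h => hfs ⟨i, h⟩
      have : x' (i, s) = if 1 ≤ x (i, s) then 1 else 0 := by
        simp only [hx']
        by_cases h1 : 1 ≤ x (i, s)
        · rw [if_pos h1, if_pos h1]
        · rw [if_neg h1, if_neg h1, if_neg (fun hh => hnofc hh.1)]
      rw [this]
      split_ifs with h1
      · nlinarith [hw i, h1]
      · have := hnn (i, s)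
        nlinarith [(hw i).le]
  -- assemble
  have hfeas' : Feasible r d L 𝒥 x' := ⟨hx'nn, hx'supp, hx'cov⟩
  have hge : cost w x ≤ cost w x' := hmin x' hfeas'
  have heq : cost w x' = cost w x := le_antisymm hcost_le hge
  exact ⟨x', hfeas', hx'int, heq, hfeas', fun y hy => heq ▸ (heq ▸ hmin y hy : cost w x ≤ cost w y)⟩
end

section
/- Let x be an optimal feasible solution satisfying condition (⋆). If every job j ∈ 𝒥_f(x) has the same immediate successor (possibly dummy) in every fractional schedule of x containing j, then there exists a feasible integral solution whose cost equals the cost of x; in particular, uniqueness of immediate successors guarantees that some optimal feasible solution is integral. -/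
open scoped Classical BigOperators

lemma opt_le_one {n c : ℕ} {r d : Fin n → ℝ} {L : ℝ} {𝒥 : Fin c → Set (Fin n)} {w : Fin c → ℝ}
    (hw : ∀ i, 0 < w i) {x : Fin c × Finset (Fin n) → ℝ}
    (hopt : Optimal r d L 𝒥 w x) : ∀ p, x p ≤ 1 := by
  obtain ⟨⟨hnn, hsch, hcov⟩, hmin⟩ := hopt
  intro q
  by_contra h
  push_neg at h
  set y := Function.update x q 1 with hy
  have hyq : y q = 1 := Function.update_self _ _ _
  have hyp : ∀ p, p ≠ q → y p = x p := fun p hp => Function.update_of_ne hp _ _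
  have hfeas : Feasible r d L 𝒥 y := by
    refine ⟨?_, ?_, ?_⟩
    · intro p
      by_cases hp : p = q
      · subst hp; rw [hyq]; norm_num
      · rw [hyp p hp]; exact hnn p
    · intro p hp
      by_cases hpq : p = q
      · subst hpq; exact hsch p (lt_trans one_pos h)
      · rw [hyp p hpq] at hp; exact hsch p hp
    · intro j
      by_cases hj : j ∈ q.2
      · have : ∀ p ∈ (Finset.univ : Finset (Fin c × Finset (Fin n))),
            0 ≤ (if j ∈ p.2 then y p else 0) := by
          intro p _
          by_cases hp : p = q
          · subst hp; simp [hyq]; positivity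
          · rw [hyp p hp]; by_cases h2 : j ∈ p.2 <;> simp [h2, hnn p]
        calc (1:ℝ) = (if j ∈ q.2 then y q else 0) := by simp [hj, hyq]
          _ ≤ _ := Finset.single_le_sum this (Finset.mem_univ q)
      · have : ∀ p ∈ (Finset.univ : Finset (Fin c × Finset (Fin n))),
            (if j ∈ p.2 then y p else 0) = (if j ∈ p.2 then x p else 0) := by
          intro p _
          by_cases hp : p = q
          · subst hp; simp [hj]
          · rw [hyp p hp]
        rw [Finset.sum_congr rfl this]
        exact hcov j
  have hcost : cost w y < cost w x := by
    have hdiff : cost w y - cost w x = w q.1 * (1 - x q) := by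
      unfold cost
      rw [← Finset.sum_sub_distrib]
      rw [Finset.sum_eq_single q]
      · rw [hyq]; ring
      · intro p _ hp; rw [hyp p hp]; ring
      · intro hq; exact absurd (Finset.mem_univ q) hq
    have : w q.1 * (1 - x q) < 0 :=
      mul_neg_of_pos_of_neg (hw q.1) (by linarith)
    linarith
  exact absurd (hmin y hfeas) (not_le.2 hcost)

lemma suffix_mem {n c : ℕ} {x : Fin c × Finset (Fin n) → ℝ}
    (hsucc : ∀ j ∈ Jf x, ∀ s s' : Finset (Fin n),
      FracSched x s → FracSched x s' → j ∈ s → j ∈ s' → succIn s j = succIn s' j)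
    {s s' : Finset (Fin n)} (hs : FracSched x s) (hs' : FracSched x s')
    {j : Fin n} (hjs : j ∈ s) (hjs' : j ∈ s') :
    ∀ k : Fin n, j ≤ k → k ∈ s → k ∈ s' := by
  suffices H : ∀ N : ℕ, ∀ k : Fin n, k.val < N → j ≤ k → k ∈ s → k ∈ s' by
    intro k hk hks; exact H (k.val + 1) k (Nat.lt_succ_self _) hk hks
  intro N
  induction N with
  | zero => intro k hk; omega
  | succ N IH =>
    intro k hkN hjk hks
    rcases eq_or_lt_of_le hjk with heq | hlt
    · exact heq ▸ hjs'
    · set B := s.filter (fun a => j ≤ a ∧ a < k) with hB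
      have hjB : j ∈ B := Finset.mem_filter.2 ⟨hjs, le_refl j, hlt⟩
      have hBne : B.Nonempty := ⟨j, hjB⟩
      set p := B.max' hBne with hp
      have hpB : p ∈ B := B.max'_mem hBne
      obtain ⟨hps, hjp, hpk⟩ := Finset.mem_filter.1 hpB
      have hmin : (s.filter (fun a => p < a)).min = (k : WithTop (Fin n)) := by
        apply le_antisymm
        · exact Finset.min_le (Finset.mem_filter.2 ⟨hks, hpk⟩)
        · apply Finset.le_min
          intro b hb
          obtain ⟨hbs, hpb⟩ := Finset.mem_filter.1 hb
          rw [WithTop.coe_le_coe]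
          by_contra hcon
          push_neg at hcon
          have hbB : b ∈ B := Finset.mem_filter.2 ⟨hbs, le_of_lt (lt_of_le_of_lt hjp hpb), hcon⟩
          exact absurd (B.le_max' b hbB) (not_le.2 hpb)
      have hpJf : p ∈ Jf x := ⟨s, hs, hps⟩
      have hps' : p ∈ s' := IH p (by omega) hjp hps
      have heqsucc := hsucc p hpJf s s' hs hs' hps hps'
      unfold succIn at heqsucc
      rw [hmin] at heqsucc
      have : k ∈ s'.filter (fun a => p < a) := Finset.mem_of_min heqsucc.symm
      exact (Finset.mem_filter.1 this).1

lemma exists_goodmin {n c : ℕ} {x : Fin c × Finset (Fin n) → ℝ}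
    (hsucc : ∀ j ∈ Jf x, ∀ s s' : Finset (Fin n),
      FracSched x s → FracSched x s' → j ∈ s → j ∈ s' → succIn s j = succIn s' j) :
    ∀ (j : Fin n), j ∈ Jf x → ∃ (t : Finset (Fin n)) (m : Fin n),
      FracSched x t ∧ j ∈ t ∧ t.min = ↑m ∧
      ∀ s', FracSched x s' → m ∈ s' → s'.min = (↑m : WithTop (Fin n)) := by
  suffices H : ∀ N : ℕ, ∀ (m : Fin n) (s : Finset (Fin n)), m.val < N →
      FracSched x s → s.min = ↑m → ∀ j ∈ s, ∃ (t : Finset (Fin n)) (m' : Fin n),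
      FracSched x t ∧ j ∈ t ∧ t.min = ↑m' ∧
      ∀ s', FracSched x s' → m' ∈ s' → s'.min = (↑m' : WithTop (Fin n)) by
    intro j hj
    obtain ⟨s, hs, hjs⟩ := hj
    obtain ⟨m, hm⟩ := Finset.min_of_mem hjs
    exact H (m.val + 1) m s (Nat.lt_succ_self _) hs hm j hjs
  intro N
  induction N with
  | zero => intro m s h; omega
  | succ N IH =>
    intro m s hmN hs hsmin j hjs
    by_cases hgood : ∀ s', FracSched x s' → m ∈ s' → s'.min = (↑m : WithTop (Fin n))
    · exact ⟨s, m, hs, hjs, hsmin, hgood⟩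
    · push_neg at hgood
      obtain ⟨s', hs', hms', hne⟩ := hgood
      obtain ⟨m', hm'⟩ := Finset.min_of_mem hms'
      have hm'le : m' ≤ m := by
        have := Finset.min_le hms'
        rw [hm'] at this
        exact_mod_cast this
      have hm'lt : m' < m := lt_of_le_of_ne hm'le (by rintro rfl; exact hne hm')
      have hms : m ∈ s := Finset.mem_of_min hsmin
      have hmj : m ≤ j := by
        have := Finset.min_le hjs
        rw [hsmin] at this
        exact_mod_cast this
      have hjs' : j ∈ s' := suffix_mem hsucc hs hs' hms hms' j hmj hjs
      exact IH m' s' (by omega) hs' hm' j hjs'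

/-- classes that use schedule `s` fractionally -/
noncomputable def Isel {n c : ℕ} (x : Fin c × Finset (Fin n) → ℝ) (s : Finset (Fin n)) : Finset (Fin c) :=
  Finset.univ.filter (fun i => FracCol x (i, s))

/-- among those, the ones of minimal weight -/
noncomputable def Amin {n c : ℕ} (w : Fin c → ℝ) (x : Fin c × Finset (Fin n) → ℝ) (s : Finset (Fin n)) :
    Finset (Fin c) :=
  (Isel x s).filter (fun i => ∀ i' ∈ Isel x s, w i ≤ w i')

/-- fractional schedules whose minimum is a "good" minimum -/
def GoodS {n c : ℕ} (x : Fin c × Finset (Fin n) → ℝ) (s : Finset (Fin n)) : Prop :=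
  FracSched x s ∧ ∃ m : Fin n, s.min = ↑m ∧
    ∀ s', FracSched x s' → m ∈ s' → s'.min = (↑m : WithTop (Fin n))

def ChosenCol {n c : ℕ} (w : Fin c → ℝ) (x : Fin c × Finset (Fin n) → ℝ)
    (p : Fin c × Finset (Fin n)) : Prop :=
  GoodS x p.2 ∧ (Amin w x p.2).min = (↑p.1 : WithTop (Fin c))

noncomputable def roundSol {n c : ℕ} (w : Fin c → ℝ) (x : Fin c × Finset (Fin n) → ℝ) :
    Fin c × Finset (Fin n) → ℝ :=
  fun p => if ChosenCol w x p then 1 else if FracCol x p then 0 else x p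


set_option maxHeartbeats 1000000 in
theorem same_successor_implies_integral_optimum {n c : ℕ} (r d : Fin n → ℝ) (L : ℝ) (𝒥 : Fin c → Set (Fin n)) (w : Fin c → ℝ)
    (hrd : ∀ j, r j ≤ d j) (hmono : ∀ j k : Fin n, j ≤ k → r j ≤ r k)
    (hL : 0 < L) (hw : ∀ i, 0 < w i)
    (x : Fin c × Finset (Fin n) → ℝ)
    (hopt : Optimal r d L 𝒥 w x) (hstar : StarCond x)
    (hsucc : ∀ j ∈ Jf x, ∀ s s' : Finset (Fin n),
      FracSched x s → FracSched x s' → j ∈ s → j ∈ s' → succIn s j = succIn s' j) :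
    ∃ x' : Fin c × Finset (Fin n) → ℝ,
      Feasible r d L 𝒥 x' ∧ Integral x' ∧ cost w x' = cost w x ∧
      Optimal r d L 𝒥 w x' := by
  have hle1 : ∀ p, x p ≤ 1 := opt_le_one hw hopt
  obtain ⟨⟨hnn, hsch, hcov⟩, hmin⟩ := hopt
  set x' := roundSol w x with hx'def
  -- chosen columns are fractional
  have hchosen_frac : ∀ p, ChosenCol w x p → FracCol x p := by
    intro p ⟨hg, hA⟩
    have h1 : p.1 ∈ Amin w x p.2 := Finset.mem_of_min hA
    have h2 : p.1 ∈ Isel x p.2 := Finset.mem_of_mem_filter _ h1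
    have h3 : FracCol x (p.1, p.2) := (Finset.mem_filter.1 h2).2
    rwa [Prod.mk.eta] at h3
  -- values of x'
  have hx'chosen : ∀ p, ChosenCol w x p → x' p = 1 := fun p hp => if_pos hp
  have hx'frac : ∀ p, ¬ ChosenCol w x p → FracCol x p → x' p = 0 := by
    intro p h1 h2; simp only [hx'def, roundSol, if_neg h1, if_pos h2]
  have hx'other : ∀ p, ¬ FracCol x p → x' p = x p := by
    intro p h2
    have h1 : ¬ ChosenCol w x p := fun h => h2 (hchosen_frac p h)
    simp only [hx'def, roundSol, if_neg h1, if_neg h2]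
  have hx'nn : ∀ p, 0 ≤ x' p := by
    intro p
    by_cases h1 : ChosenCol w x p
    · rw [hx'chosen p h1]; norm_num
    · by_cases h2 : FracCol x p
      · rw [hx'frac p h1 h2]
      · rw [hx'other p h2]; exact hnn p
  -- uniqueness of fractional schedules through a good minimum
  have huniq : ∀ (s : Finset (Fin n)) (m : Fin n), s.min = ↑m → FracSched x s →
      (∀ s', FracSched x s' → m ∈ s' → s'.min = (↑m : WithTop (Fin n))) →
      ∀ s₁, FracSched x s₁ → m ∈ s₁ → s₁ = s := by
    intro s m hsmin hs hgood s₁ hs₁ hms₁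
    have hms : m ∈ s := Finset.mem_of_min hsmin
    have hs₁min : s₁.min = (↑m : WithTop (Fin n)) := hgood s₁ hs₁ hms₁
    ext k
    constructor
    · intro hk
      have hmk : m ≤ k := by
        have := Finset.min_le hk; rw [hs₁min] at this; exact_mod_cast this
      exact suffix_mem hsucc hs₁ hs hms₁ hms k hmk hk
    · intro hk
      have hmk : m ≤ k := by
        have := Finset.min_le hk; rw [hsmin] at this; exact_mod_cast this
      exact suffix_mem hsucc hs hs₁ hms hms₁ k hmk hk
  -- every job in Jf is covered by some chosen column
  have hcover_frac : ∀ j ∈ Jf x, ∃ q : Fin c × Finset (Fin n), ChosenCol w x q ∧ j ∈ q.2 := by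
    intro j hj
    obtain ⟨t, m, ht, hjt, htmin, hgood⟩ := exists_goodmin hsucc j hj
    obtain ⟨i0, hi0⟩ := id ht
    have hi0' : i0 ∈ Isel x t := Finset.mem_filter.2 ⟨Finset.mem_univ _, hi0⟩
    obtain ⟨b, hb, hbmin⟩ := Finset.exists_min_image (Isel x t) w ⟨i0, hi0'⟩
    have hbA : b ∈ Amin w x t := Finset.mem_filter.2 ⟨hb, hbmin⟩
    obtain ⟨i1, hi1⟩ := Finset.min_of_mem hbA
    refine ⟨(i1, t), ⟨⟨ht, m, htmin, hgood⟩, hi1⟩, hjt⟩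
  -- feasibility of x'
  have hfeas' : Feasible r d L 𝒥 x' := by
    refine ⟨hx'nn, ?_, ?_⟩
    · intro p hp
      by_cases h1 : ChosenCol w x p
      · exact hsch p (hchosen_frac p h1).1
      · by_cases h2 : FracCol x p
        · rw [hx'frac p h1 h2] at hp; exact absurd hp (lt_irrefl 0)
        · rw [hx'other p h2] at hp; exact hsch p hp
    · intro j
      by_cases hj : j ∈ Jf x
      · obtain ⟨q, hq, hjq⟩ := hcover_frac j hj
        have h1 : (1:ℝ) = (if j ∈ q.2 then x' q else 0) := by
          rw [if_pos hjq, hx'chosen q hq]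
        rw [h1]
        apply Finset.single_le_sum (f := fun p => if j ∈ p.2 then x' p else 0)
          (fun p _ => by by_cases h : j ∈ p.2 <;> simp [h, hx'nn p]) (Finset.mem_univ q)
      · have : ∀ p ∈ (Finset.univ : Finset (Fin c × Finset (Fin n))),
            (if j ∈ p.2 then x' p else 0) = (if j ∈ p.2 then x p else 0) := by
          intro p _
          by_cases h : j ∈ p.2
          · rw [if_pos h, if_pos h]
            have hnf : ¬ FracCol x p := by
              intro hf
              exact hj ⟨p.2, ⟨p.1, by rwa [Prod.mk.eta]⟩, h⟩
            exact hx'other p hnf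
          · rw [if_neg h, if_neg h]
        rw [Finset.sum_congr rfl this]
        exact hcov j
  -- integrality
  have hint : Integral x' := by
    intro p
    by_cases h1 : ChosenCol w x p
    · right; exact hx'chosen p h1
    · by_cases h2 : FracCol x p
      · left; exact hx'frac p h1 h2
      · rw [hx'other p h2]
        rcases lt_or_eq_of_le (hnn p) with hpos | hzero
        · right
          rcases lt_or_eq_of_le (hle1 p) with hlt | heq
          · exact absurd ⟨hpos, hlt⟩ h2
          · exact heq
        · left; exact hzero.symm
  -- cost comparison
  set F : Finset (Fin c × Finset (Fin n)) := Finset.univ.filter (fun p => FracCol x p) with hF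
  set C : Finset (Fin c × Finset (Fin n)) := Finset.univ.filter (fun p => ChosenCol w x p) with hC
  have hCF : C ⊆ F := by
    intro p hp
    exact Finset.mem_filter.2 ⟨Finset.mem_univ _, hchosen_frac p (Finset.mem_filter.1 hp).2⟩
  have hkey : ∀ q ∈ C, w q.1 ≤ ∑ p ∈ F.filter (fun p => p.2 = q.2), w p.1 * x p := by
    intro q hqC
    obtain ⟨-, hq⟩ := Finset.mem_filter.1 hqC
    obtain ⟨⟨hfs, m, hqmin, hgood⟩, hqA⟩ := hq
    have hq1A : q.1 ∈ Amin w x q.2 := Finset.mem_of_min hqA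
    have hq1min : ∀ i' ∈ Isel x q.2, w q.1 ≤ w i' := (Finset.mem_filter.1 hq1A).2
    have hmq : m ∈ q.2 := Finset.mem_of_min hqmin
    have hmJf : m ∈ Jf x := ⟨q.2, hfs, hmq⟩
    -- star condition sum equals sum over the fiber
    have hsum : (∑ p : Fin c × Finset (Fin n), if FracCol x p ∧ m ∈ p.2 then x p else 0)
        = ∑ p ∈ F.filter (fun p => p.2 = q.2), x p := by
      rw [Finset.sum_filter, Finset.sum_filter]
      apply Finset.sum_congr rfl
      intro p _
      by_cases hfp : FracCol x p
      · simp only [hfp, true_and]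
        by_cases hmp : m ∈ p.2
        · have hp2 : p.2 = q.2 :=
            huniq q.2 m hqmin hfs hgood p.2 ⟨p.1, by rwa [Prod.mk.eta]⟩ hmp
          simp [hmp, hp2, hmq]
        · have hp2 : ¬ p.2 = q.2 := fun h => hmp (h ▸ hmq)
          simp [hmp, hp2, hmq]
      · simp [hfp]
    have hone : (1:ℝ) ≤ ∑ p ∈ F.filter (fun p => p.2 = q.2), x p := by
      rw [← hsum]; exact hstar m hmJf
    have hstep : w q.1 ≤ w q.1 * ∑ p ∈ F.filter (fun p => p.2 = q.2), x p := by
      nlinarith [hw q.1]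
    refine hstep.trans ?_
    rw [Finset.mul_sum]
    apply Finset.sum_le_sum
    intro p hp
    obtain ⟨hpF, hp2⟩ := Finset.mem_filter.1 hp
    have hpfrac : FracCol x p := (Finset.mem_filter.1 hpF).2
    have hp1 : p.1 ∈ Isel x q.2 := by
      apply Finset.mem_filter.2
      refine ⟨Finset.mem_univ _, ?_⟩
      rw [← hp2, Prod.mk.eta]
      exact hpfrac
    exact mul_le_mul_of_nonneg_right (hq1min p.1 hp1) (hnn p)
  -- the fibers are pairwise disjoint
  have hdisj : (C : Set (Fin c × Finset (Fin n))).PairwiseDisjoint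
      (fun q => F.filter (fun p => p.2 = q.2)) := by
    intro q hqC q' hq'C hne
    have hq := (Finset.mem_filter.1 hqC).2
    have hq' := (Finset.mem_filter.1 hq'C).2
    have h2ne : q.2 ≠ q'.2 := by
      intro h
      apply hne
      have := hq.2
      rw [h, hq'.2] at this
      have h1 : q'.1 = q.1 := by exact_mod_cast this
      exact Prod.ext h1.symm h
    apply Finset.disjoint_left.2
    intro p hp hp'
    exact h2ne (((Finset.mem_filter.1 hp).2).symm.trans ((Finset.mem_filter.1 hp').2))
  have hcost_le : cost w x' ≤ cost w x := by
    have hsplit : ∀ y : (Fin c × Finset (Fin n)) → ℝ,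
        cost w y = (∑ p ∈ F, w p.1 * y p) + ∑ p ∈ Finset.univ \ F, w p.1 * y p := by
      intro y
      rw [cost, ← Finset.sum_sdiff (Finset.subset_univ F)]
      ring
    rw [hsplit x', hsplit x]
    have houter : ∑ p ∈ Finset.univ \ F, w p.1 * x' p = ∑ p ∈ Finset.univ \ F, w p.1 * x p := by
      apply Finset.sum_congr rfl
      intro p hp
      have hnf : ¬ FracCol x p := by
        intro h
        exact (Finset.mem_sdiff.1 hp).2 (Finset.mem_filter.2 ⟨Finset.mem_univ _, h⟩)
      rw [hx'other p hnf]
    rw [houter]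
    have hinner : ∑ p ∈ F, w p.1 * x' p = ∑ q ∈ C, w q.1 := by
      have h1 : ∀ p ∈ F, w p.1 * x' p = if ChosenCol w x p then w p.1 else 0 := by
        intro p hp
        have hfrac : FracCol x p := (Finset.mem_filter.1 hp).2
        by_cases hch : ChosenCol w x p
        · rw [if_pos hch, hx'chosen p hch, mul_one]
        · rw [if_neg hch, hx'frac p hch hfrac, mul_zero]
      rw [Finset.sum_congr rfl h1, ← Finset.sum_filter]
      congr 1
      rw [hF, Finset.filter_filter, hC]
      apply Finset.filter_congr
      intro p _
      exact ⟨fun h => h.2, fun h => ⟨hchosen_frac p h, h⟩⟩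
    rw [hinner]
    have h2 : ∑ q ∈ C, w q.1 ≤ ∑ q ∈ C, ∑ p ∈ F.filter (fun p => p.2 = q.2), w p.1 * x p :=
      Finset.sum_le_sum hkey
    have h3 : ∑ q ∈ C, ∑ p ∈ F.filter (fun p => p.2 = q.2), w p.1 * x p
        = ∑ p ∈ C.biUnion (fun q => F.filter (fun p => p.2 = q.2)), w p.1 * x p :=
      (Finset.sum_biUnion hdisj).symm
    have h4 : ∑ p ∈ C.biUnion (fun q => F.filter (fun p => p.2 = q.2)), w p.1 * x p
        ≤ ∑ p ∈ F, w p.1 * x p := by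
      apply Finset.sum_le_sum_of_subset_of_nonneg
      · intro p hp
        obtain ⟨q, -, hpq⟩ := Finset.mem_biUnion.1 hp
        exact (Finset.filter_subset _ _) hpq
      · intro p _ _
        exact mul_nonneg (le_of_lt (hw p.1)) (hnn p)
    linarith
  have hcost_ge : cost w x ≤ cost w x' := hmin x' hfeas'
  have hcost_eq : cost w x' = cost w x := le_antisymm hcost_le hcost_ge
  exact ⟨x', hfeas', hint, hcost_eq, hfeas', fun y hy => hcost_eq ▸ hmin y hy⟩
end

section
/- Let x be an optimal feasible solution satisfying condition (⋆) such that every job belongs to at most one fractional schedule of x. Then for every fractional schedule s of x, the set I(s) = { i : 0 < x (i, s) < 1 } contains at least two machine classes, and w i = w i' for all i, i' ∈ I(s). -/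
open scoped Classical BigOperators

lemma swap_contra {n c : ℕ} {r d : Fin n → ℝ} {L : ℝ} {𝒥 : Fin c → Set (Fin n)} {w : Fin c → ℝ}
    {x : Fin c × Finset (Fin n) → ℝ} (hopt : Optimal r d L 𝒥 w x)
    {i i' : Fin c} {s : Finset (Fin n)} (hii : i ≠ i')
    (hxi : 0 < x (i, s)) (hxi' : 0 < x (i', s)) (hlt : w i < w i') : False := by
  classical
  set ε := x (i', s) with hεdef
  set y : Fin c × Finset (Fin n) → ℝ :=
    fun p => x p + (if p = (i, s) then ε else 0) - (if p = (i', s) then ε else 0) with hy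
  have hne : ((i, s) : Fin c × Finset (Fin n)) ≠ (i', s) := by
    simp [Prod.ext_iff, hii]
  have key : ∀ (q : Fin c × Finset (Fin n)) (j : Fin n),
      (∑ p : Fin c × Finset (Fin n), if j ∈ p.2 then (if p = q then ε else 0) else 0)
        = if j ∈ q.2 then ε else 0 := by
    intro q j
    have : ∀ p : Fin c × Finset (Fin n),
        (if j ∈ p.2 then (if p = q then ε else 0) else 0)
          = if p = q then (if j ∈ q.2 then ε else 0) else 0 := by
      intro p
      by_cases hpq : p = q
      · subst hpq; simp
      · simp [hpq]
    rw [Finset.sum_congr rfl fun p _ => this p]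
    simp
  have hyfeas : Feasible r d L 𝒥 y := by
    refine ⟨?_, ?_, ?_⟩
    · intro p
      by_cases h1 : p = (i, s)
      · subst h1
        simp only [hy, if_neg hne]
        split_ifs <;> linarith
      · by_cases h2 : p = (i', s)
        · subst h2
          simp [hy, Ne.symm hne]
          exact le_of_eq hεdef
        · simpa [hy, h1, h2] using hopt.1.1 p
    · intro p hp
      by_cases h1 : p = (i, s)
      · subst h1
        exact hopt.1.2.1 (i, s) hxi
      · by_cases h2 : p = (i', s)
        · subst h2
          simp [hy, Ne.symm hne] at hp
          exact absurd hεdef (ne_of_lt hp)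
        · simp only [hy, if_neg h1, if_neg h2, add_zero, sub_zero] at hp
          exact hopt.1.2.1 p hp
    · intro j
      have hsplit : (∑ p : Fin c × Finset (Fin n), if j ∈ p.2 then y p else 0)
          = (∑ p : Fin c × Finset (Fin n), if j ∈ p.2 then x p else 0)
            + (∑ p : Fin c × Finset (Fin n), if j ∈ p.2 then (if p = (i, s) then ε else 0) else 0)
            - (∑ p : Fin c × Finset (Fin n), if j ∈ p.2 then (if p = (i', s) then ε else 0) else 0) := by
        rw [← Finset.sum_add_distrib, ← Finset.sum_sub_distrib]
        refine Finset.sum_congr rfl fun p _ => ?_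
        by_cases hj : j ∈ p.2 <;> simp [hy, hj]
      rw [hsplit, key, key]
      simpa using hopt.1.2.2 j
  have hcost : cost w y = cost w x + w i * ε - w i' * ε := by
    unfold cost
    have hsplit : (∑ p : Fin c × Finset (Fin n), w p.1 * y p)
        = (∑ p : Fin c × Finset (Fin n), w p.1 * x p)
          + (∑ p : Fin c × Finset (Fin n), if p = (i, s) then w p.1 * ε else 0)
          - (∑ p : Fin c × Finset (Fin n), if p = (i', s) then w p.1 * ε else 0) := by
      rw [← Finset.sum_add_distrib, ← Finset.sum_sub_distrib]
      refine Finset.sum_congr rfl fun p _ => ?_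
      simp only [hy]
      rcases eq_or_ne p (i, s) with h1 | h1
      · subst h1
        rw [if_pos rfl, if_neg hne, if_pos rfl, if_neg hne]
        ring
      · rcases eq_or_ne p (i', s) with h2 | h2
        · subst h2
          rw [if_neg h1, if_pos rfl, if_neg h1, if_pos rfl]
          ring
        · rw [if_neg h1, if_neg h2, if_neg h1, if_neg h2]
          ring
    rw [hsplit]
    simp
  have hεpos : 0 < ε := hxi'
  have hlt' : cost w y < cost w x := by
    rw [hcost]; nlinarith
  exact absurd (hopt.2 y hyfeas) (not_le.mpr hlt')

theorem fractional_classes_two_and_equal_weights {n c : ℕ} (r d : Fin n → ℝ) (L : ℝ) (𝒥 : Fin c → Set (Fin n)) (w : Fin c → ℝ)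
    (hrd : ∀ j, r j ≤ d j) (hmono : ∀ j k : Fin n, j ≤ k → r j ≤ r k)
    (hL : 0 < L) (hw : ∀ i, 0 < w i)
    (x : Fin c × Finset (Fin n) → ℝ)
    (hopt : Optimal r d L 𝒥 w x) (hstar : StarCond x)
    (huniq : ∀ (j : Fin n) (s s' : Finset (Fin n)),
      FracSched x s → FracSched x s' → j ∈ s → j ∈ s' → s = s') :
    ∀ s : Finset (Fin n), FracSched x s →
      (∃ i i' : Fin c, i ≠ i' ∧ FracCol x (i, s) ∧ FracCol x (i', s)) ∧
      (∀ i i' : Fin c, FracCol x (i, s) → FracCol x (i', s) → w i = w i') := by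

  intro s hs
  obtain ⟨i₀, hi₀⟩ := hs
  have hsched := hopt.1.2.1 (i₀, s) hi₀.1
  obtain ⟨j₀, hj₀⟩ := hsched.1
  have hj₀f : j₀ ∈ Jf x := ⟨s, ⟨i₀, hi₀⟩, hj₀⟩
  have hT := hstar j₀ hj₀f
  constructor
  · by_contra hcon
    push_neg at hcon
    have hone : ∀ i, FracCol x (i, s) → i = i₀ := by
      intro i hi
      by_contra hne
      exact hcon i i₀ hne hi hi₀
    have hle : (∑ p : Fin c × Finset (Fin n), if FracCol x p ∧ j₀ ∈ p.2 then x p else 0)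
        ≤ ∑ p : Fin c × Finset (Fin n), if p = (i₀, s) then x p else 0 := by
      apply Finset.sum_le_sum
      intro p _
      by_cases h : FracCol x p ∧ j₀ ∈ p.2
      · have hfc : FracCol x (p.1, p.2) := h.1
        have hp2 : p.2 = s := huniq j₀ p.2 s ⟨p.1, hfc⟩ ⟨i₀, hi₀⟩ h.2 hj₀
        have hp1 : p.1 = i₀ := hone p.1 (by rw [← hp2]; exact hfc)
        have hpe : p = (i₀, s) := Prod.ext hp1 hp2
        rw [hpe] at h ⊢
        rw [if_pos h, if_pos rfl]
      · simp only [if_neg h]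
        split
        · exact hopt.1.1 p
        · exact le_refl 0
    have hsum : (∑ p : Fin c × Finset (Fin n), if p = (i₀, s) then x p else 0) = x (i₀, s) := by
      simp
    have : (1 : ℝ) ≤ x (i₀, s) := le_trans hT (by rw [← hsum]; exact hle)
    exact absurd this (not_le.mpr hi₀.2)
  · intro i i' hi hi'
    rcases lt_trichotomy (w i) (w i') with h | h | h
    · exact absurd (swap_contra hopt (fun he => absurd (congrArg w he) (ne_of_lt h)) hi.1 hi'.1 h) id
    · exact h
    · exact absurd (swap_contra hopt (fun he => absurd (congrArg w he) (ne_of_lt h)) hi'.1 hi.1 h) id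
end

section
/- Let x be an optimal feasible solution satisfying condition (⋆) such that every job belongs to at most one fractional schedule of x. Then for every fractional schedule s of x, the total fractional mass on s equals one: Σ_{i ∈ I(s)} x (i, s) = 1, where I(s) = { i : 0 < x (i, s) < 1 }. -/
open scoped Classical BigOperators

theorem fractional_mass_eq_one {n c : ℕ} (r d : Fin n → ℝ) (L : ℝ) (𝒥 : Fin c → Set (Fin n)) (w : Fin c → ℝ)
    (hrd : ∀ j, r j ≤ d j) (hmono : ∀ j k : Fin n, j ≤ k → r j ≤ r k)
    (hL : 0 < L) (hw : ∀ i, 0 < w i)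
    (x : Fin c × Finset (Fin n) → ℝ)
    (hopt : Optimal r d L 𝒥 w x) (hstar : StarCond x)
    (huniq : ∀ (j : Fin n) (s s' : Finset (Fin n)),
      FracSched x s → FracSched x s' → j ∈ s → j ∈ s' → s = s') :
    ∀ s : Finset (Fin n), FracSched x s →
      ∑ i ∈ Finset.univ.filter (fun i : Fin c => FracCol x (i, s)), x (i, s) = 1 := by
  intro s hFS
  obtain ⟨i0, hi0⟩ := hFS
  have hfeas := hopt.1
  have hx0 : 0 < x (i0, s) := hi0.1
  have hsched := hfeas.2.1 _ hx0
  obtain ⟨j, hj⟩ := hsched.1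
  have hjJf : j ∈ Jf x := ⟨s, ⟨i0, hi0⟩, hj⟩
  set T := ∑ i ∈ Finset.univ.filter (fun i : Fin c => FracCol x (i, s)), x (i, s) with hT
  have hkey : ∀ k ∈ s, (∑ p : Fin c × Finset (Fin n),
      if FracCol x p ∧ k ∈ p.2 then x p else 0) = T := by
    intro k hk
    rw [Fintype.sum_prod_type]
    have h1 : ∀ i : Fin c,
        (∑ t : Finset (Fin n), if FracCol x (i, t) ∧ k ∈ t then x (i, t) else 0)
        = if FracCol x (i, s) then x (i, s) else 0 := by
      intro i
      rw [Finset.sum_eq_single s]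
      · simp [hk]
      · intro t _ hts
        rw [if_neg]
        rintro ⟨hf, hkt⟩
        exact hts (huniq k t s ⟨i, hf⟩ ⟨i0, hi0⟩ hkt hk)
      · simp
    simp_rw [h1]
    rw [hT, Finset.sum_filter]
  have hge : 1 ≤ T := by
    have := hstar j hjJf
    rwa [hkey j hj] at this
  have hTpos : (0 : ℝ) < T := lt_of_lt_of_le one_pos hge
  have hle : T ≤ 1 := by
    by_contra hlt
    push_neg at hlt
    set y : Fin c × Finset (Fin n) → ℝ :=
      fun p => if FracCol x p ∧ p.2 = s then x p / T else x p with hy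
    have hyle : ∀ p, y p ≤ x p := by
      intro p
      by_cases h : FracCol x p ∧ p.2 = s
      · simpa [hy, h] using div_le_self (hfeas.1 p) hlt.le
      · simp [hy, h]
    have hy0 : ∀ p, 0 ≤ y p := by
      intro p
      by_cases h : FracCol x p ∧ p.2 = s
      · simp only [hy, h, and_self, if_true]
        exact div_nonneg (hfeas.1 p) hTpos.le
      · simpa [hy, h] using hfeas.1 p
    have hcov : ∀ k : Fin n, 1 ≤ ∑ p : Fin c × Finset (Fin n), if k ∈ p.2 then y p else 0 := by
      intro k
      by_cases hks : k ∈ s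
      · have hsplit : ∀ p : Fin c × Finset (Fin n),
            (if k ∈ p.2 then y p else 0) =
            (if FracCol x p ∧ p.2 = s then x p / T else 0) +
            (if k ∈ p.2 ∧ ¬(FracCol x p ∧ p.2 = s) then x p else 0) := by
          intro p
          by_cases h1 : FracCol x p ∧ p.2 = s
          · have hkp : k ∈ p.2 := h1.2 ▸ hks
            simp [hy, h1, hkp, hks]
          · by_cases h2 : k ∈ p.2 <;> simp [hy, h1, h2]
        rw [Finset.sum_congr rfl (fun p _ => hsplit p), Finset.sum_add_distrib]
        have hA : (∑ p : Fin c × Finset (Fin n),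
            if FracCol x p ∧ p.2 = s then x p / T else 0) = 1 := by
          rw [Fintype.sum_prod_type]
          have h1 : ∀ i : Fin c,
              (∑ t : Finset (Fin n), if FracCol x (i, t) ∧ t = s then x (i, t) / T else 0)
              = if FracCol x (i, s) then x (i, s) / T else 0 := by
            intro i
            rw [Finset.sum_eq_single s]
            · simp
            · intro t _ hts
              rw [if_neg]
              rintro ⟨_, h⟩
              exact hts h
            · simp
          simp_rw [h1]
          rw [← Finset.sum_filter, ← Finset.sum_div, ← hT, div_self (ne_of_gt hTpos)]
        have hB : 0 ≤ ∑ p : Fin c × Finset (Fin n),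
            if k ∈ p.2 ∧ ¬(FracCol x p ∧ p.2 = s) then x p else 0 :=
          Finset.sum_nonneg fun p _ => by
            split_ifs with h
            · exact hfeas.1 p
            · exact le_rfl
        linarith
      · have heq : ∀ p : Fin c × Finset (Fin n),
            (if k ∈ p.2 then y p else 0) = (if k ∈ p.2 then x p else 0) := by
          intro p
          by_cases h2 : k ∈ p.2
          · simp only [h2, if_true, hy]
            rw [if_neg]
            rintro ⟨_, h⟩
            exact hks (h ▸ h2)
          · simp [h2]
        rw [Finset.sum_congr rfl fun p _ => heq p]
        exact hfeas.2.2 k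
    have hyfeas : Feasible r d L 𝒥 y := by
      refine ⟨hy0, ?_, hcov⟩
      intro p hp
      apply hfeas.2.1
      by_cases h : FracCol x p ∧ p.2 = s
      · exact h.1.1
      · simpa [hy, h] using hp
    have hcost : cost w y < cost w x := by
      unfold cost
      apply Finset.sum_lt_sum
      · intro p _
        exact mul_le_mul_of_nonneg_left (hyle p) (hw p.1).le
      · refine ⟨(i0, s), Finset.mem_univ _, ?_⟩
        have hys : y (i0, s) = x (i0, s) / T := by simp [hy, hi0]
        rw [hys]
        exact mul_lt_mul_of_pos_left (div_lt_self hx0 hlt) (hw i0)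
    exact absurd (hopt.2 y hyfeas) (not_le.mpr hcost)
  linarith
end

section
/- Let x be a feasible solution, j a job, and (i₀, s₀) a column with j ∈ s₀ and x (i₀, s₀) ≥ 1. Then there exists a feasible solution x' with cost(x') ≤ cost(x) such that j belongs to no fractional schedule of x' (i.e., j ∉ 𝒥_f(x')); in particular, if x is optimal then x' is optimal. Such an x' can be obtained from x by moving, for each fractional column (i, s) with j ∈ s, the value x (i, s) onto the column (i, s \ {j}) (dropping it when s = {j}). -/
open scoped Classical BigOperators

/-- The solution obtained from `x` by moving, for each fractional column `(i, s)` with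
`j ∈ s`, the value `x (i, s)` onto the column `(i, s \\ {j})`, dropping it when `s = {j}`. -/
noncomputable def moveOff {n c : ℕ} (x : Fin c × Finset (Fin n) → ℝ) (j : Fin n) :
    Fin c × Finset (Fin n) → ℝ := fun p =>
  if j ∈ p.2 then (if FracCol x p then 0 else x p)
  else x p +
    (if p.2.Nonempty ∧ FracCol x (p.1, insert j p.2) then x (p.1, insert j p.2) else 0)

lemma compatible_mono {n : ℕ} {r d : Fin n → ℝ} {L : ℝ} {s t : Finset (Fin n)}
    (hst : s ⊆ t) (h : Compatible r d L t) : Compatible r d L s :=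
  fun j hj k hk hjk => h j (hst hj) k (hst hk) hjk

/-- The involution swapping `j`'s membership in the schedule. -/
noncomputable def moveEquiv {n c : ℕ} (j : Fin n) :
    (Fin c × Finset (Fin n)) ≃ (Fin c × Finset (Fin n)) where
  toFun p := (p.1, if j ∈ p.2 then p.2.erase j else insert j p.2)
  invFun p := (p.1, if j ∈ p.2 then p.2.erase j else insert j p.2)
  left_inv p := by
    by_cases h : j ∈ p.2 <;>
      simp [h, Finset.insert_erase, Finset.erase_insert]
  right_inv p := by
    by_cases h : j ∈ p.2 <;>
      simp [h, Finset.insert_erase, Finset.erase_insert]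

theorem moveOff_removes_job_from_fractional {n c : ℕ} (r d : Fin n → ℝ) (L : ℝ) (𝒥 : Fin c → Set (Fin n)) (w : Fin c → ℝ)
    (hrd : ∀ j, r j ≤ d j) (hmono : ∀ j k : Fin n, j ≤ k → r j ≤ r k)
    (hL : 0 < L) (hw : ∀ i, 0 < w i)
    (x : Fin c × Finset (Fin n) → ℝ)
    (hfeas : Feasible r d L 𝒥 x)
    (j : Fin n) (i₀ : Fin c) (s₀ : Finset (Fin n))
    (hj : j ∈ s₀) (hx₀ : 1 ≤ x (i₀, s₀)) :
    Feasible r d L 𝒥 (moveOff x j) ∧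
    cost w (moveOff x j) ≤ cost w x ∧
    j ∉ Jf (moveOff x j) ∧
    (Optimal r d L 𝒥 w x → Optimal r d L 𝒥 w (moveOff x j)) := by
  classical
  obtain ⟨hnn, hsupp, hcov⟩ := hfeas
  set A : Fin c × Finset (Fin n) → ℝ :=
    fun p => if j ∈ p.2 ∧ FracCol x p then 0 else x p with hA
  set B : Fin c × Finset (Fin n) → ℝ :=
    fun p => if j ∈ p.2 then 0 else
      (if p.2.Nonempty ∧ FracCol x (p.1, insert j p.2) then x (p.1, insert j p.2) else 0)
    with hB
  have hxAB : ∀ p, moveOff x j p = A p + B p := by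
    intro p
    by_cases h : j ∈ p.2
    · by_cases hf : FracCol x p <;> simp [moveOff, hA, hB, h, hf]
    · simp [moveOff, hA, hB, h]
  have hA0 : ∀ p, 0 ≤ A p := by
    intro p; by_cases h : j ∈ p.2 ∧ FracCol x p <;> simp [hA, h, hnn p]
  have hB0 : ∀ p, 0 ≤ B p := by
    intro p
    by_cases h : j ∈ p.2
    · simp [hB, h]
    · by_cases h2 : p.2.Nonempty ∧ FracCol x (p.1, insert j p.2) <;>
        simp [hB, h, h2, hnn _]
  have hx'0 : ∀ p, 0 ≤ moveOff x j p := fun p => by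
    rw [hxAB]; exact add_nonneg (hA0 p) (hB0 p)
  -- B composed with the involution
  have hBe : ∀ p : Fin c × Finset (Fin n),
      B (moveEquiv j p) =
        if j ∈ p.2 ∧ (p.2.erase j).Nonempty ∧ FracCol x p then x p else 0 := by
    intro p
    by_cases h : j ∈ p.2
    · have h1 : j ∉ p.2.erase j := Finset.notMem_erase j p.2
      have h2 : insert j (p.2.erase j) = p.2 := Finset.insert_erase h
      simp [moveEquiv, hB, h, h1, h2, and_assoc]
    · have h1 : j ∈ insert j p.2 := Finset.mem_insert_self j p.2
      simp [moveEquiv, hB, h, h1]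
  -- coverage for k ≠ j : the sum is preserved exactly
  have hcov' : ∀ k : Fin n, k ≠ j →
      (∑ p : Fin c × Finset (Fin n), if k ∈ p.2 then moveOff x j p else 0)
        = ∑ p : Fin c × Finset (Fin n), if k ∈ p.2 then x p else 0 := by
    intro k hk
    have hsplit : (∑ p : Fin c × Finset (Fin n), if k ∈ p.2 then moveOff x j p else 0)
        = (∑ p : Fin c × Finset (Fin n), if k ∈ p.2 then A p else 0)
          + ∑ p : Fin c × Finset (Fin n), if k ∈ p.2 then B p else 0 := by
      rw [← Finset.sum_add_distrib]
      refine Finset.sum_congr rfl fun p _ => ?_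
      by_cases h : k ∈ p.2 <;> simp [h, hxAB]
    have hBsum : (∑ p : Fin c × Finset (Fin n), if k ∈ p.2 then B p else 0)
        = ∑ p : Fin c × Finset (Fin n),
            if j ∈ p.2 ∧ k ∈ p.2 ∧ FracCol x p then x p else 0 := by
      rw [← Equiv.sum_comp (moveEquiv j)
        (fun p => if k ∈ p.2 then B p else 0)]
      refine Finset.sum_congr rfl fun p _ => ?_
      by_cases hjp : j ∈ p.2
      · have he2 : (moveEquiv j p).2 = p.2.erase j := by simp [moveEquiv, hjp]
        rw [he2, hBe]
        by_cases hkp : k ∈ p.2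
        · have hke : k ∈ p.2.erase j := Finset.mem_erase.2 ⟨hk, hkp⟩
          have hne : (p.2.erase j).Nonempty := ⟨k, hke⟩
          by_cases hf : FracCol x p <;> simp [hke, hjp, hkp, hne, hf]
        · have hke : k ∉ p.2.erase j := fun h => hkp (Finset.mem_of_mem_erase h)
          simp [hke, hkp]
      · have he2 : (moveEquiv j p).2 = insert j p.2 := by simp [moveEquiv, hjp]
        rw [he2, hBe]
        simp [hjp]
    have hAsum : (∑ p : Fin c × Finset (Fin n), if k ∈ p.2 then A p else 0)
        = (∑ p : Fin c × Finset (Fin n), if k ∈ p.2 then x p else 0)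
          - ∑ p : Fin c × Finset (Fin n),
              if j ∈ p.2 ∧ k ∈ p.2 ∧ FracCol x p then x p else 0 := by
      rw [eq_sub_iff_add_eq, ← Finset.sum_add_distrib]
      refine Finset.sum_congr rfl fun p _ => ?_
      by_cases hkp : k ∈ p.2
      · by_cases hjp : j ∈ p.2
        · by_cases hf : FracCol x p <;> simp [hA, hkp, hjp, hf]
        · simp [hA, hkp, hjp]
      · simp [hkp]
    rw [hsplit, hBsum, hAsum]; ring
  -- feasibility of moveOff x j
  have hfeas' : Feasible r d L 𝒥 (moveOff x j) := by
    refine ⟨hx'0, ?_, ?_⟩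
    · intro p hp
      by_cases h : j ∈ p.2
      · have : moveOff x j p = if FracCol x p then 0 else x p := by
          simp [moveOff, h]
        rw [this] at hp
        by_cases hf : FracCol x p
        · simp [hf] at hp
        · rw [if_neg hf] at hp
          exact hsupp p hp
      · by_cases hxp : 0 < x p
        · exact hsupp p hxp
        · have hxp0 : x p = 0 := le_antisymm (not_lt.1 hxp) (hnn p)
          have : moveOff x j p
              = if p.2.Nonempty ∧ FracCol x (p.1, insert j p.2)
                  then x (p.1, insert j p.2) else 0 := by
            simp [moveOff, h, hxp0]
          rw [this] at hp
          by_cases h2 : p.2.Nonempty ∧ FracCol x (p.1, insert j p.2)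
          · obtain ⟨hne, hfr⟩ := h2
            have hsch := hsupp (p.1, insert j p.2) hfr.1
            exact ⟨hne, compatible_mono (Finset.subset_insert j p.2) hsch.2.1,
              fun k hk => hsch.2.2 k (Finset.mem_insert_of_mem hk)⟩
          · simp [h2] at hp
    · intro k
      by_cases hk : k = j
      · subst hk
        have hnf : ¬ FracCol x (i₀, s₀) := fun hf => absurd hx₀ (not_le.2 hf.2)
        have hterm : (if k ∈ s₀ then moveOff x k (i₀, s₀) else 0) = x (i₀, s₀) := by
          simp [moveOff, hj, hnf]
        calc (1 : ℝ) ≤ x (i₀, s₀) := hx₀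
          _ = (fun p : Fin c × Finset (Fin n) =>
                if k ∈ p.2 then moveOff x k p else 0) (i₀, s₀) := hterm.symm
          _ ≤ ∑ p : Fin c × Finset (Fin n), if k ∈ p.2 then moveOff x k p else 0 := by
              refine Finset.single_le_sum (f := fun p : Fin c × Finset (Fin n) => if k ∈ p.2 then moveOff x k p else 0) (fun p _ => ?_) (Finset.mem_univ (i₀, s₀))
              by_cases h : k ∈ p.2 <;> simp [h, hx'0 p]
      · rw [hcov' k hk]; exact hcov k
  -- cost inequality
  have hcost : cost w (moveOff x j) ≤ cost w x := by
    have hsplit : cost w (moveOff x j)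
        = (∑ p : Fin c × Finset (Fin n), w p.1 * A p)
          + ∑ p : Fin c × Finset (Fin n), w p.1 * B p := by
      rw [cost, ← Finset.sum_add_distrib]
      refine Finset.sum_congr rfl fun p _ => ?_
      rw [hxAB]; ring
    have hBsum : (∑ p : Fin c × Finset (Fin n), w p.1 * B p)
        ≤ ∑ p : Fin c × Finset (Fin n),
            if j ∈ p.2 ∧ FracCol x p then w p.1 * x p else 0 := by
      rw [← Equiv.sum_comp (moveEquiv j) (fun p => w p.1 * B p)]
      refine Finset.sum_le_sum fun p _ => ?_
      have he1 : (moveEquiv j p).1 = p.1 := rfl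
      rw [he1, hBe]
      by_cases h : j ∈ p.2 ∧ (p.2.erase j).Nonempty ∧ FracCol x p
      · rw [if_pos h, if_pos ⟨h.1, h.2.2⟩]
      · rw [if_neg h, mul_zero]
        by_cases h2 : j ∈ p.2 ∧ FracCol x p
        · rw [if_pos h2]
          exact mul_nonneg (hw p.1).le (hnn p)
        · rw [if_neg h2]
    have hAsum : (∑ p : Fin c × Finset (Fin n), w p.1 * A p)
        = cost w x - ∑ p : Fin c × Finset (Fin n),
            if j ∈ p.2 ∧ FracCol x p then w p.1 * x p else 0 := by
      rw [eq_sub_iff_add_eq, cost, ← Finset.sum_add_distrib]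
      refine Finset.sum_congr rfl fun p _ => ?_
      by_cases h : j ∈ p.2 ∧ FracCol x p <;> simp [hA, h]
    rw [hsplit, hAsum]
    linarith [hBsum]
  -- j not in Jf
  have hJf : j ∉ Jf (moveOff x j) := by
    rintro ⟨s, ⟨i, h1, h2⟩, hjs⟩
    have heq : moveOff x j (i, s) = if FracCol x (i, s) then 0 else x (i, s) := by
      simp [moveOff, hjs]
    by_cases hf : FracCol x (i, s)
    · rw [heq, if_pos hf] at h1
      exact lt_irrefl (0 : ℝ) h1
    · rw [heq, if_neg hf] at h1 h2
      exact hf ⟨h1, h2⟩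
  exact ⟨hfeas', hcost, hJf,
    fun hopt => ⟨hfeas', fun y hy => le_trans hcost (hopt.2 y hy)⟩⟩
end

section
/- Let s be a finset of jobs with at least two elements. Then s is pairwise compatible if and only if both of the following hold: (i) for every j ∈ s having an immediate successor k in s, d j ≤ r k; and (ii) d (max s) − r (min s) ≤ L. -/
open scoped Classical BigOperators

theorem compatible_iff_successors_and_window {n : ℕ} (r d : Fin n → ℝ) (L : ℝ)
    (hrd : ∀ j, r j ≤ d j) (hmono : ∀ j k : Fin n, j ≤ k → r j ≤ r k)
    (hL : 0 < L)
    (s : Finset (Fin n)) (hs : s.Nonempty) (hcard : 2 ≤ s.card) :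
    Compatible r d L s ↔
      ((∀ j ∈ s, ∀ k : Fin n, succIn s j = (k : WithTop (Fin n)) → d j ≤ r k) ∧
        d (s.max' hs) - r (s.min' hs) ≤ L) := by

  constructor
  · intro hc
    refine ⟨?_, ?_⟩
    · intro j hj k hk
      have hkmem : k ∈ s.filter (fun k => j < k) := Finset.mem_of_min hk
      simp only [Finset.mem_filter] at hkmem
      exact (hc j hj k hkmem.1 hkmem.2).1
    · have hlt : s.min' hs < s.max' hs := s.min'_lt_max'_of_card hcard
      exact (hc _ (s.min'_mem hs) _ (s.max'_mem hs) hlt).2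
  · rintro ⟨h1, h2⟩
    have key : ∀ j ∈ s, ∀ k ∈ s, j < k → d j ≤ r k := by
      intro j hj k hk hjk
      have hne : (s.filter (fun k => j < k)).Nonempty :=
        ⟨k, Finset.mem_filter.2 ⟨hk, hjk⟩⟩
      set k' := (s.filter (fun k => j < k)).min' hne with hk'def
      have hsucc : succIn s j = (k' : WithTop (Fin n)) := by
        rw [succIn, ← Finset.coe_min']
      have hd : d j ≤ r k' := h1 j hj k' hsucc
      have hle : k' ≤ k := Finset.min'_le _ _ (Finset.mem_filter.2 ⟨hk, hjk⟩)
      exact hd.trans (hmono _ _ hle)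
    intro j hj k hk hjk
    refine ⟨key j hj k hk hjk, ?_⟩
    have hdk : d k ≤ d (s.max' hs) := by
      rcases eq_or_lt_of_le (s.le_max' k hk) with h | h
      · rw [h]
      · exact (key k hk _ (s.max'_mem hs) h).trans (hrd _)
    have hrj : r (s.min' hs) ≤ r j := hmono _ _ (s.min'_le j hj)
    linarith
end

section
/- Fix a set 𝒥 ⊆ Fin n of jobs and dual weights λ : Fin n → ℝ. For jobs j ≤ k, let F(j, k) be the (finite) collection of pairwise compatible finsets s ⊆ 𝒥 with minimum element j and maximum element k, and when F(j, k) is nonempty let f(j, k) be the maximum over s ∈ F(j, k) of Σ_{m ∈ s} λ m. Let j < k with j, k ∈ 𝒥 and d k − r j ≤ L, and suppose the set T = { ℓ : j ≤ ℓ < k, F(j, ℓ) ≠ ∅, and d ℓ ≤ r k } is nonempty. Then F(j, k) is nonempty and the dynamic-programming recursion holds: f(j, k) = λ k + max_{ℓ ∈ T} f(j, ℓ). -/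
open scoped Classical BigOperators

/-- The collection `F(j, k)` of pairwise compatible finsets of jobs from `𝒥` with
minimum element `j` and maximum element `k`. -/
noncomputable def Fcoll {n : ℕ} (r d : Fin n → ℝ) (L : ℝ) (𝒥 : Set (Fin n)) (j k : Fin n) :
    Finset (Finset (Fin n)) :=
  Finset.univ.filter (fun s => (∀ m ∈ s, m ∈ 𝒥) ∧ Compatible r d L s ∧
    s.min = (j : WithTop (Fin n)) ∧ s.max = (k : WithBot (Fin n)))

/-- `f(j, k)`: the maximum of `∑_{m ∈ s} λ m` over `s ∈ F(j, k)` (when `F(j, k)` is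
nonempty, this supremum is attained since `F(j, k)` is finite). -/
noncomputable def fval {n : ℕ} (r d : Fin n → ℝ) (L : ℝ) (𝒥 : Set (Fin n))
    (lam : Fin n → ℝ) (j k : Fin n) : ℝ :=
  sSup ((fun s : Finset (Fin n) => ∑ m ∈ s, lam m) ''
    (↑(Fcoll r d L 𝒥 j k) : Set (Finset (Fin n))))

lemma mem_Fcoll_iff {n : ℕ} {r d : Fin n → ℝ} {L : ℝ} {𝒥 : Set (Fin n)} {j k : Fin n}
    {s : Finset (Fin n)} :
    s ∈ Fcoll r d L 𝒥 j k ↔ (∀ m ∈ s, m ∈ 𝒥) ∧ Compatible r d L s ∧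
      s.min = (j : WithTop (Fin n)) ∧ s.max = (k : WithBot (Fin n)) := by
  simp [Fcoll]

lemma mem_of_Fcoll_min {n : ℕ} {s : Finset (Fin n)} {j : Fin n}
    (h : s.min = (j : WithTop (Fin n))) : j ∈ s := Finset.mem_of_min h

lemma le_of_Fcoll_min {n : ℕ} {s : Finset (Fin n)} {j m : Fin n}
    (h : s.min = (j : WithTop (Fin n))) (hm : m ∈ s) : j ≤ m := by
  have := Finset.min_le hm
  rw [h] at this
  exact_mod_cast this

lemma le_of_Fcoll_max {n : ℕ} {s : Finset (Fin n)} {k m : Fin n}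
    (h : s.max = (k : WithBot (Fin n))) (hm : m ∈ s) : m ≤ k := by
  have := Finset.le_max hm
  rw [h] at this
  exact_mod_cast this

lemma insert_mem_Fcoll {n : ℕ} {r d : Fin n → ℝ} {L : ℝ}
    (hrd : ∀ j, r j ≤ d j) (hmono : ∀ j k : Fin n, j ≤ k → r j ≤ r k)
    {𝒥 : Set (Fin n)} {j k ℓ : Fin n} (hk𝒥 : k ∈ 𝒥) (hℓk : ℓ < k)
    (hdℓ : d ℓ ≤ r k) (hdL : d k - r j ≤ L) {s : Finset (Fin n)}
    (hs : s ∈ Fcoll r d L 𝒥 j ℓ) :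
    insert k s ∈ Fcoll r d L 𝒥 j k ∧ k ∉ s := by
  rw [mem_Fcoll_iff] at hs
  obtain ⟨h𝒥, hcomp, hmin, hmax⟩ := hs
  have hjs : j ∈ s := mem_of_Fcoll_min hmin
  have hle : ∀ m ∈ s, j ≤ m := fun m hm => le_of_Fcoll_min hmin hm
  have hleℓ : ∀ m ∈ s, m ≤ ℓ := fun m hm => le_of_Fcoll_max hmax hm
  have hℓs : ℓ ∈ s := Finset.mem_of_max hmax
  have hks : k ∉ s := fun h => absurd (hleℓ k h) (not_le.mpr hℓk)
  refine ⟨?_, hks⟩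
  rw [mem_Fcoll_iff]
  refine ⟨?_, ?_, ?_, ?_⟩
  · intro m hm
    rcases Finset.mem_insert.mp hm with h | h
    · exact h ▸ hk𝒥
    · exact h𝒥 m h
  · intro a ha b hb hab
    rcases Finset.mem_insert.mp ha with ha' | ha' <;>
      rcases Finset.mem_insert.mp hb with hb' | hb'
    · exact absurd hab (by simp [ha', hb'])
    · subst ha'
      exact absurd ((hleℓ b hb').trans_lt hℓk) (not_lt.mpr hab.le)
    · subst hb'
      constructor
      · rcases eq_or_lt_of_le (hleℓ a ha') with h | h
        · exact h ▸ hdℓ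
        · exact ((hcomp a ha' ℓ hℓs h).1.trans (hrd ℓ)).trans hdℓ
      · have := hmono j a (hle a ha')
        linarith
    · exact hcomp a ha' b hb' hab
  · apply le_antisymm
    · exact Finset.min_le (Finset.mem_insert_of_mem hjs)
    · apply Finset.le_min
      intro b hb
      rcases Finset.mem_insert.mp hb with h | h
      · subst h
        exact_mod_cast le_of_lt ((hle ℓ hℓs).trans_lt hℓk)
      · exact_mod_cast hle b h
  · apply le_antisymm
    · apply Finset.max_le
      intro b hb
      rcases Finset.mem_insert.mp hb with h | h
      · subst h; exact le_refl _
      · exact_mod_cast le_of_lt ((hleℓ b h).trans_lt hℓk)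
    · exact Finset.le_max (Finset.mem_insert_self k s)

lemma erase_mem_Fcoll {n : ℕ} {r d : Fin n → ℝ} {L : ℝ}
    {𝒥 : Set (Fin n)} {j k : Fin n} (hjk : j < k) {s : Finset (Fin n)}
    (hs : s ∈ Fcoll r d L 𝒥 j k) :
    ∃ ℓ, j ≤ ℓ ∧ ℓ < k ∧ d ℓ ≤ r k ∧ s.erase k ∈ Fcoll r d L 𝒥 j ℓ ∧ k ∈ s := by
  rw [mem_Fcoll_iff] at hs
  obtain ⟨h𝒥, hcomp, hmin, hmax⟩ := hs
  have hjs : j ∈ s := mem_of_Fcoll_min hmin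
  have hks : k ∈ s := Finset.mem_of_max hmax
  have hle : ∀ m ∈ s, j ≤ m := fun m hm => le_of_Fcoll_min hmin hm
  have hlek : ∀ m ∈ s, m ≤ k := fun m hm => le_of_Fcoll_max hmax hm
  have hje : j ∈ s.erase k := Finset.mem_erase.mpr ⟨hjk.ne, hjs⟩
  have hne : (s.erase k).Nonempty := ⟨j, hje⟩
  set ℓ := (s.erase k).max' hne with hℓdef
  have hℓe : ℓ ∈ s.erase k := Finset.max'_mem _ _
  have hℓs : ℓ ∈ s := Finset.mem_of_mem_erase hℓe
  have hℓk : ℓ < k := lt_of_le_of_ne (hlek ℓ hℓs) (Finset.mem_erase.mp hℓe).1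
  refine ⟨ℓ, hle ℓ hℓs, hℓk, (hcomp ℓ hℓs k hks hℓk).1, ?_, hks⟩
  rw [mem_Fcoll_iff]
  refine ⟨fun m hm => h𝒥 m (Finset.mem_of_mem_erase hm),
    fun a ha b hb hab => hcomp a (Finset.mem_of_mem_erase ha) b
      (Finset.mem_of_mem_erase hb) hab, ?_, ?_⟩
  · apply le_antisymm
    · exact Finset.min_le hje
    · apply Finset.le_min
      intro b hb
      exact_mod_cast hle b (Finset.mem_of_mem_erase hb)
  · rw [← Finset.coe_max' hne]

lemma fval_eq_sup' {n : ℕ} {r d : Fin n → ℝ} {L : ℝ} {𝒥 : Set (Fin n)}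
    {lam : Fin n → ℝ} {j k : Fin n} (h : (Fcoll r d L 𝒥 j k).Nonempty) :
    fval r d L 𝒥 lam j k =
      (Fcoll r d L 𝒥 j k).sup' h (fun s => ∑ m ∈ s, lam m) := by
  rw [Finset.sup'_eq_csSup_image]
  rfl

theorem dp_recursion {n : ℕ} (r d : Fin n → ℝ) (L : ℝ)
    (hrd : ∀ j, r j ≤ d j) (hmono : ∀ j k : Fin n, j ≤ k → r j ≤ r k)
    (hL : 0 < L)
    (𝒥 : Set (Fin n)) (lam : Fin n → ℝ) (j k : Fin n)
    (hjk : j < k) (hj : j ∈ 𝒥) (hk : k ∈ 𝒥) (hdL : d k - r j ≤ L)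
    (hT : (Finset.univ.filter (fun ℓ : Fin n =>
      j ≤ ℓ ∧ ℓ < k ∧ (Fcoll r d L 𝒥 j ℓ).Nonempty ∧ d ℓ ≤ r k)).Nonempty) :
    (Fcoll r d L 𝒥 j k).Nonempty ∧
    fval r d L 𝒥 lam j k =
      lam k + (Finset.univ.filter (fun ℓ : Fin n =>
        j ≤ ℓ ∧ ℓ < k ∧ (Fcoll r d L 𝒥 j ℓ).Nonempty ∧ d ℓ ≤ r k)).sup' hT
        (fun ℓ => fval r d L 𝒥 lam j ℓ) := by
  set T := (Finset.univ.filter (fun ℓ : Fin n =>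
      j ≤ ℓ ∧ ℓ < k ∧ (Fcoll r d L 𝒥 j ℓ).Nonempty ∧ d ℓ ≤ r k)) with hTdef
  have hTmem : ∀ ℓ ∈ T, j ≤ ℓ ∧ ℓ < k ∧ (Fcoll r d L 𝒥 j ℓ).Nonempty ∧ d ℓ ≤ r k := by
    intro ℓ hℓ
    simpa [hTdef] using hℓ
  -- F(j,k) is nonempty
  obtain ⟨ℓ₀, hℓ₀⟩ := hT
  obtain ⟨_, hℓ₀k, ⟨s₀, hs₀⟩, hdℓ₀⟩ := hTmem ℓ₀ hℓ₀
  have hins₀ := insert_mem_Fcoll hrd hmono hk hℓ₀k hdℓ₀ hdL hs₀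
  have hFk : (Fcoll r d L 𝒥 j k).Nonempty := ⟨_, hins₀.1⟩
  refine ⟨hFk, ?_⟩
  rw [fval_eq_sup' hFk]
  apply le_antisymm
  · -- every s ∈ F(j,k) decomposes
    apply Finset.sup'_le
    intro s hs
    obtain ⟨ℓ, hjℓ, hℓk, hdℓ, hse, hks⟩ := erase_mem_Fcoll hjk hs
    have hℓT : ℓ ∈ T := by
      simp only [hTdef, Finset.mem_filter, Finset.mem_univ, true_and]
      exact ⟨hjℓ, hℓk, ⟨_, hse⟩, hdℓ⟩
    have hsum : ∑ m ∈ s, lam m = lam k + ∑ m ∈ s.erase k, lam m :=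
      (Finset.add_sum_erase s lam hks).symm
    rw [hsum]
    have h1 : ∑ m ∈ s.erase k, lam m ≤ fval r d L 𝒥 lam j ℓ := by
      rw [fval_eq_sup' ⟨_, hse⟩]
      exact Finset.le_sup' (fun s => ∑ m ∈ s, lam m) hse
    have h2 : fval r d L 𝒥 lam j ℓ ≤ T.sup' hT (fun ℓ => fval r d L 𝒥 lam j ℓ) :=
      Finset.le_sup' (fun ℓ => fval r d L 𝒥 lam j ℓ) hℓT
    linarith
  · -- for each ℓ ∈ T and s ∈ F(j,ℓ), insert k s ∈ F(j,k)
    have key : T.sup' hT (fun ℓ => fval r d L 𝒥 lam j ℓ) ≤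
        (Fcoll r d L 𝒥 j k).sup' hFk (fun s => ∑ m ∈ s, lam m) - lam k := by
      apply Finset.sup'_le
      intro ℓ hℓ
      obtain ⟨hjℓ, hℓk, hne, hdℓ⟩ := hTmem ℓ hℓ
      rw [fval_eq_sup' hne]
      apply Finset.sup'_le
      intro s hs
      obtain ⟨hins, hks⟩ := insert_mem_Fcoll hrd hmono hk hℓk hdℓ hdL hs
      have : ∑ m ∈ insert k s, lam m ≤
          (Fcoll r d L 𝒥 j k).sup' hFk (fun s => ∑ m ∈ s, lam m) :=
        Finset.le_sup' (fun s => ∑ m ∈ s, lam m) hins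
      rw [Finset.sum_insert hks] at this
      linarith
    linarith
end
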